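/- arXiv:2105.06378 — 3 statements merged into one kernel-verified Lean document; each statement's English description precedes it below -/
import Mathlib

section
/- For every ε > 0 there exists a constant C_ε > 0 such that the following holds. Let G be a finite group acting transitively on a finite set Ω with |Ω| ≥ 2, and set d = ⌈C_ε · ln|Ω|⌉. Then the average, over all d-tuples (s₁,…,s_d) ∈ G^d (each tuple weighted uniformly, i.e. divide the sum by |G|^d), of λ(G↺Ω, S ⊔ S⁻¹) is at most ε, where S ⊔ S⁻¹ is the symmetric multiset {s₁,…,s_d, s₁⁻¹,…,s_d⁻¹} of size 2d. -/
open Finset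

/-- `λ(G ↺ Ω, t)` for the (multi)set given by the tuple `t : ι → G`, where the right action
of `G` on `Ω` is given by the map `a : Ω → G → Ω`:  the supremum of
`|⟨Mv,v⟩|/⟨v,v⟩` over nonzero mean-zero `v : Ω → ℝ`, where
`(Mv)(ω) = (1/|ι|) ∑ i, v (ω · t i)`. -/
noncomputable def lambdaSch {G Ω ι : Type*} [Group G] [Fintype Ω] [Fintype ι]
    (a : Ω → G → Ω) (t : ι → G) : ℝ :=
  sSup {r : ℝ | ∃ v : Ω → ℝ, (∑ ω, v ω) = 0 ∧ v ≠ 0 ∧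
    r = |∑ ω, ((Fintype.card ι : ℝ)⁻¹ * ∑ i, v (a ω (t i))) * v ω| / (∑ ω, v ω * v ω)}

open Finset Matrix

namespace RSE
open scoped Classical

section Sec0


/-- Noncommutative expansion of a power of a sum. -/
theorem sum_pow_list {R ι : Type*} [Semiring R] [Fintype ι] (f : ι → R) (K : ℕ) :
    (∑ x, f x) ^ K = ∑ i : Fin K → ι, (List.ofFn fun j => f (i j)).prod := by
  induction K with
  | zero => simp
  | succ K ih =>
      rw [pow_succ', ih]
      rw [← Fintype.sum_equiv (Fin.consEquiv fun _ : Fin (K+1) => ι)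
        (fun p => (List.ofFn fun j => f (((Fin.consEquiv fun _ : Fin (K+1) => ι)) p j)).prod)
        (fun i => (List.ofFn fun j => f (i j)).prod) (fun p => rfl)]
      rw [Fintype.sum_prod_type]
      rw [Finset.sum_mul]
      refine Finset.sum_congr rfl fun x _ => ?_
      rw [Finset.mul_sum]
      refine Finset.sum_congr rfl fun i _ => ?_
      rw [List.ofFn_succ]
      simp [Fin.consEquiv]

theorem factorial_le_aux (j i : ℕ) : (j + i).factorial ≤ (j + i)^i * j.factorial := by
  induction i with
  | zero => simp
  | succ i ih =>
      have h1 : (j + (i+1)).factorial = (j + i + 1) * (j + i).factorial := by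
        rw [← Nat.add_assoc]; exact rfl
      calc (j + (i+1)).factorial = (j + i + 1) * (j + i).factorial := h1
        _ ≤ (j + i + 1) * ((j + i)^i * j.factorial) := Nat.mul_le_mul_left _ ih
        _ ≤ (j + i + 1) * ((j + i + 1)^i * j.factorial) := by
            exact Nat.mul_le_mul_left _ (Nat.mul_le_mul_right _ (Nat.pow_le_pow_left (Nat.le_succ _) i))
        _ = (j + (i+1))^(i+1) * j.factorial := by ring_nf

theorem fact_ratio {j k d : ℕ} (hjk : j ≤ k) (hkd : k ≤ d) :
    d^j * k.factorial ≤ d^k * j.factorial := by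
  have h1 : k.factorial ≤ k^(k-j) * j.factorial := by
    have := factorial_le_aux j (k - j)
    rwa [Nat.add_sub_cancel' hjk] at this
  have h2 : k^(k-j) ≤ d^(k-j) := Nat.pow_le_pow_left hkd _
  calc d^j * k.factorial ≤ d^j * (d^(k-j) * j.factorial) :=
        Nat.mul_le_mul_left _ (le_trans h1 (Nat.mul_le_mul_right _ h2))
    _ = d^k * j.factorial := by rw [← Nat.mul_assoc, ← pow_add, Nat.add_sub_cancel' hjk]

theorem pow_self_le_fact (k : ℕ) : (k:ℝ)^k ≤ 3^k * (k.factorial : ℝ) := by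
  induction k with
  | zero => simp
  | succ k ih =>
      rcases Nat.eq_zero_or_pos k with hk | hk
      · subst hk; norm_num
      have hkR : (0:ℝ) < k := by exact_mod_cast hk
      have h1 : ((k:ℝ) + 1) ≤ k * Real.exp (1/k) := by
        have := Real.add_one_le_exp (1/(k:ℝ))
        calc (k:ℝ) + 1 = k * (1/k + 1) := by field_simp; ring
          _ ≤ k * Real.exp (1/k) := mul_le_mul_of_nonneg_left this (le_of_lt hkR)
      have h2 : ((k:ℝ) + 1)^k ≤ (k:ℝ)^k * Real.exp 1 := by
        calc ((k:ℝ)+1)^k ≤ ((k:ℝ) * Real.exp (1/k))^k :=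
              pow_le_pow_left₀ (by positivity) h1 k
          _ = (k:ℝ)^k * (Real.exp (1/k))^k := mul_pow _ _ _
          _ = (k:ℝ)^k * Real.exp 1 := by
              rw [← Real.exp_nat_mul]
              congr 2
              field_simp
      have h3 : Real.exp 1 ≤ 3 := by
        have := Real.exp_one_lt_d9
        linarith
      have hfact : ((k+1).factorial : ℝ) = ((k:ℝ)+1) * k.factorial := by
        push_cast [Nat.factorial_succ]; ring
      have hexp : (0:ℝ) ≤ Real.exp 1 := (Real.exp_pos 1).le
      calc ((k+1:ℕ):ℝ)^(k+1) = ((k:ℝ)+1)^k * ((k:ℝ)+1) := by push_cast; ring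
        _ ≤ ((k:ℝ)^k * Real.exp 1) * ((k:ℝ)+1) :=
            mul_le_mul_of_nonneg_right h2 (by positivity)
        _ ≤ ((3^k * (k.factorial:ℝ)) * 3) * ((k:ℝ)+1) := by
            apply mul_le_mul_of_nonneg_right _ (by positivity)
            exact mul_le_mul ih h3 hexp (by positivity)
        _ = 3^(k+1) * (((k:ℝ)+1) * k.factorial) := by push_cast; ring
        _ = 3^(k+1) * ((k+1).factorial : ℝ) := by rw [hfact]


end Sec0

section Sec1


variable {Ω G : Type} [Fintype Ω] [Group G] [Fintype G]

/-- permutation matrix of right translation by `g` -/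
noncomputable def Pm (a : Ω → G → Ω) (g : G) : Matrix Ω Ω ℝ :=
  Matrix.of fun ω σ => if a ω g = σ then 1 else 0

/-- number of fixed points, as a real -/
noncomputable def Fixr (a : Ω → G → Ω) (g : G) : ℝ :=
  ∑ ω, if a ω g = ω then 1 else 0

variable {a : Ω → G → Ω}

theorem Pm_mul (ham : ∀ ω g h, a (a ω g) h = a ω (g * h)) (g h : G) :
    Pm a g * Pm a h = Pm a (g * h) := by
  ext ω σ
  simp only [Matrix.mul_apply, Pm, Matrix.of_apply, ite_mul, one_mul, zero_mul]
  rw [Finset.sum_ite_eq univ (a ω g) (fun τ => if a τ h = σ then (1:ℝ) else 0)]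
  simp [ham ω g h]

theorem Pm_one (ha1 : ∀ ω, a ω 1 = ω) : Pm a 1 = 1 := by
  ext ω σ
  simp only [Pm, Matrix.of_apply, Matrix.one_apply, ha1]

theorem Pm_listProd (ha1 : ∀ ω, a ω 1 = ω) (ham : ∀ ω g h, a (a ω g) h = a ω (g * h))
    (L : List G) : Pm a L.prod = (L.map (Pm a)).prod := by
  induction L with
  | nil => simpa using Pm_one ha1
  | cons g L ih =>
      simp only [List.prod_cons, List.map_cons, ← ih, Pm_mul ham]

theorem Pm_transpose (ha1 : ∀ ω, a ω 1 = ω) (ham : ∀ ω g h, a (a ω g) h = a ω (g * h))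
    (g : G) : (Pm a g)ᵀ = Pm a g⁻¹ := by
  ext ω σ
  simp only [Matrix.transpose_apply, Pm, Matrix.of_apply]
  have h1 : a σ g = ω ↔ a ω g⁻¹ = σ := by
    constructor
    · rintro rfl; rw [ham, mul_inv_cancel, ha1]
    · rintro rfl; rw [ham, inv_mul_cancel, ha1]
  simp [h1]

theorem Pm_rowsum (g : G) (ω : Ω) : ∑ σ, Pm a g ω σ = 1 := by
  simp only [Pm, Matrix.of_apply]
  rw [Finset.sum_ite_eq univ (a ω g) (fun _ => (1:ℝ))]
  simp

theorem Pm_trace (g : G) : (Pm a g).trace = Fixr a g := by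
  simp [Matrix.trace, Matrix.diag, Pm, Fixr]

theorem Pm_mulVec (g : G) (v : Ω → ℝ) (ω : Ω) : (Pm a g).mulVec v ω = v (a ω g) := by
  simp only [Matrix.mulVec, dotProduct, Pm, Matrix.of_apply, ite_mul, one_mul, zero_mul]
  rw [Finset.sum_ite_eq univ (a ω g) v]
  simp

theorem Fixr_nonneg (g : G) : 0 ≤ Fixr a g :=
  Finset.sum_nonneg fun _ _ => by positivity

theorem Fixr_le_card (g : G) : Fixr a g ≤ (Fintype.card Ω : ℝ) := by
  have : Fixr a g ≤ ∑ _ω : Ω, (1:ℝ) :=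
    Finset.sum_le_sum fun ω _ => by split <;> norm_num
  simpa using this

/-- rows sums multiply -/
theorem rowsum_mul {A B : Matrix Ω Ω ℝ} {α β : ℝ} (hA : ∀ ω, ∑ σ, A ω σ = α)
    (hB : ∀ ω, ∑ σ, B ω σ = β) (ω : Ω) : ∑ σ, (A * B) ω σ = α * β := by
  simp only [Matrix.mul_apply]
  rw [Finset.sum_comm]
  calc ∑ τ, ∑ σ, A ω τ * B τ σ = ∑ τ, A ω τ * β := by
        refine Finset.sum_congr rfl fun τ _ => ?_
        rw [← Finset.mul_sum, hB τ]
    _ = α * β := by rw [← Finset.sum_mul, hA ω]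

theorem rowsum_pow {A : Matrix Ω Ω ℝ} (hA : ∀ ω, ∑ σ, A ω σ = 1) (k : ℕ) (ω : Ω) :
    ∑ σ, (A ^ k) ω σ = 1 := by
  induction k generalizing ω with
  | zero => simp [Matrix.one_apply]
  | succ k ih => rw [pow_succ]; exact (rowsum_mul ih hA ω).trans (one_mul 1)


end Sec1

section Sec2


variable {Ω : Type} [Fintype Ω] [DecidableEq Ω]

theorem dot_shift (A : Matrix Ω Ω ℝ) (u w : Ω → ℝ) :
    ∑ ω, A.mulVec u ω * w ω = ∑ σ, u σ * (Aᵀ.mulVec w) σ := by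
  simp only [Matrix.mulVec, dotProduct, Finset.sum_mul, Finset.mul_sum,
    Matrix.transpose_apply]
  rw [Finset.sum_comm]
  exact Finset.sum_congr rfl fun σ _ => Finset.sum_congr rfl fun ω _ => by ring

theorem cs_sum (u w : Ω → ℝ) :
    (∑ ω, u ω * w ω)^2 ≤ (∑ ω, u ω * u ω) * (∑ ω, w ω * w ω) := by
  have := Finset.sum_mul_sq_le_sq_mul_sq univ u w
  simpa [pow_two] using this

/-- `⟨A^{2j} v, v⟩ = ‖A^j v‖²` for symmetric A -/
theorem dot_pow_split (A : Matrix Ω Ω ℝ) (hA : Aᵀ = A) (v : Ω → ℝ) (j : ℕ) :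
    ∑ ω, (A ^ (j + j)).mulVec v ω * v ω
      = ∑ ω, (A ^ j).mulVec v ω * ((A ^ j).mulVec v) ω := by
  have hsym : (A ^ j)ᵀ = A ^ j := by rw [Matrix.transpose_pow, hA]
  have h := dot_shift (A ^ j) ((A ^ j).mulVec v) v
  rw [hsym, Matrix.mulVec_mulVec, ← pow_add] at h
  rw [h]

theorem dot_pow_nonneg (A : Matrix Ω Ω ℝ) (hA : Aᵀ = A) (v : Ω → ℝ) (j : ℕ) :
    0 ≤ ∑ ω, (A ^ (j + j)).mulVec v ω * v ω := by
  rw [dot_pow_split A hA v j]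
  exact Finset.sum_nonneg fun ω _ => mul_self_nonneg _

theorem cs_chain (A : Matrix Ω Ω ℝ) (hA : Aᵀ = A) (v : Ω → ℝ) (m : ℕ) :
    (∑ ω, A.mulVec v ω * v ω) ^ (2^(m+1)) ≤
      (∑ ω, (A ^ (2^(m+1))).mulVec v ω * v ω) * (∑ ω, v ω * v ω) ^ (2^(m+1) - 1) := by
  induction m with
  | zero =>
      have h1 := cs_sum (A.mulVec v) v
      have h2 : ∑ ω, A.mulVec v ω * A.mulVec v ω = ∑ ω, (A ^ 2).mulVec v ω * v ω := by
        have := dot_pow_split A hA v 1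
        simpa using this.symm
      calc (∑ ω, A.mulVec v ω * v ω) ^ (2^1) = (∑ ω, A.mulVec v ω * v ω) ^ 2 := by norm_num
        _ ≤ (∑ ω, A.mulVec v ω * A.mulVec v ω) * (∑ ω, v ω * v ω) := h1
        _ = (∑ ω, (A ^ 2).mulVec v ω * v ω) * (∑ ω, v ω * v ω) := by rw [h2]
        _ = (∑ ω, (A ^ (2^1)).mulVec v ω * v ω) * (∑ ω, v ω * v ω) ^ (2^1 - 1) := by norm_num
  | succ m ih =>
      set E : ℕ := 2^(m+1) with hE
      have hE1 : 1 ≤ E := Nat.one_le_two_pow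
      set X : ℝ := ∑ ω, A.mulVec v ω * v ω with hX
      set D : ℝ := ∑ ω, v ω * v ω with hD
      set q : ℝ := ∑ ω, (A ^ E).mulVec v ω * v ω with hq
      set Q : ℝ := ∑ ω, (A ^ (E + E)).mulVec v ω * v ω with hQ
      have hDnn : 0 ≤ D := Finset.sum_nonneg fun ω _ => mul_self_nonneg _
      have hEeven : Even E := ⟨2^m, by rw [hE]; ring⟩
      have hXE : 0 ≤ X ^ E := hEeven.pow_nonneg X
      have hq2 : q ^ 2 ≤ Q * D := by
        have h1 := cs_sum ((A ^ E).mulVec v) v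
        have h2 : ∑ ω, (A ^ E).mulVec v ω * (A ^ E).mulVec v ω = Q := by
          rw [hQ, dot_pow_split A hA v E]
        calc q ^ 2 ≤ (∑ ω, (A ^ E).mulVec v ω * (A ^ E).mulVec v ω) * D := h1
          _ = Q * D := by rw [h2]
      have step : (X ^ E) ^ 2 ≤ (q * D ^ (E - 1)) ^ 2 := pow_le_pow_left₀ hXE ih 2
      have expand : (q * D ^ (E - 1)) ^ 2 = q ^ 2 * D ^ (E + E - 2) := by
        rw [mul_pow, ← pow_mul]
        congr 2
        omega
      have final : q ^ 2 * D ^ (E + E - 2) ≤ Q * D ^ (E + E - 1) := by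
        have hQnn : 0 ≤ Q := by rw [hQ]; exact dot_pow_nonneg A hA v E
        calc q ^ 2 * D ^ (E + E - 2) ≤ (Q * D) * D ^ (E + E - 2) :=
              mul_le_mul_of_nonneg_right hq2 (pow_nonneg hDnn _)
          _ = Q * D ^ (E + E - 1) := by
              have hexp : E + E - 1 = (E + E - 2) + 1 := by omega
              rw [hexp, pow_succ', mul_assoc]
      have hpow : (2:ℕ)^(m+1+1) = E + E := by rw [hE]; ring
      have hpow2 : (2:ℕ)^(m+1+1) = E * 2 := by rw [hE]; ring
      calc X ^ (2^(m+1+1)) = (X ^ E) ^ 2 := by rw [hpow2, pow_mul]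
        _ ≤ (q * D ^ (E - 1)) ^ 2 := step
        _ = q ^ 2 * D ^ (E + E - 2) := expand
        _ ≤ Q * D ^ (E + E - 1) := final
        _ = (∑ ω, (A ^ (2^(m+1+1))).mulVec v ω * v ω) * D ^ (2^(m+1+1) - 1) := by
            rw [hpow, hQ]


end Sec2

section Sec3




variable {Ω G : Type} [Fintype Ω] [Group G] [Fintype G] {a : Ω → G → Ω}

theorem fiber_sum (ha1 : ∀ ω, a ω 1 = ω) (ham : ∀ ω g h, a (a ω g) h = a ω (g * h))
    (htrans : ∀ ω ω' : Ω, ∃ g, a ω g = ω') (τ σ : Ω) :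
    (Fintype.card Ω : ℝ) * (∑ u : G, if a τ u = σ then (1:ℝ) else 0) = Fintype.card G := by
  have key : ∀ σ' : Ω, (∑ u : G, if a τ u = σ then (1:ℝ) else 0)
      = ∑ u : G, if a τ u = σ' then (1:ℝ) else 0 := by
    intro σ'
    obtain ⟨h, hh⟩ := htrans σ σ'
    apply Fintype.sum_equiv (Equiv.mulRight h)
    intro u
    have hiff : a τ u = σ ↔ a τ (u * h) = σ' := by
      constructor
      · rintro rfl; rw [← ham]; exact hh ▸ rfl
      · intro h2
        rw [← ham] at h2
        have h3 : a (a (a τ u) h) h⁻¹ = a σ' h⁻¹ := by rw [h2]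
        rw [ham, mul_inv_cancel, ha1] at h3
        rw [h3, ← hh, ham, mul_inv_cancel, ha1]
    simp only [Equiv.coe_mulRight]
    split_ifs with h1 h2 h2
    · simp [h2]
    · exact absurd (hiff.1 h1) h2
    · exact absurd (hiff.2 h2) h1
    · simp [h2]
  calc (Fintype.card Ω : ℝ) * (∑ u : G, if a τ u = σ then (1:ℝ) else 0)
      = ∑ σ' : Ω, ∑ u : G, if a τ u = σ' then (1:ℝ) else 0 := by
        rw [Finset.sum_congr rfl fun σ' _ => (key σ').symm, Finset.sum_const, Finset.card_univ,
          nsmul_eq_mul]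
    _ = ∑ u : G, ∑ σ' : Ω, if a τ u = σ' then (1:ℝ) else 0 := Finset.sum_comm
    _ = ∑ u : G, (1:ℝ) := by
        refine Finset.sum_congr rfl fun u _ => ?_
        rw [Finset.sum_ite_eq univ (a τ u) (fun _ => (1:ℝ))]
        simp
    _ = Fintype.card G := by simp

theorem fixsum (ha1 : ∀ ω, a ω 1 = ω) (ham : ∀ ω g h, a (a ω g) h = a ω (g * h))
    (htrans : ∀ ω ω' : Ω, ∃ g, a ω g = ω') (hn : 0 < Fintype.card Ω) (A B : G) :
    ∑ u : G, Fixr a (A * u * B) = Fintype.card G := by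
  unfold Fixr
  rw [Finset.sum_comm]
  have hΩ : (Fintype.card Ω : ℝ) ≠ 0 := by positivity
  have cond : ∀ (ω : Ω) (u : G), (a ω (A * u * B) = ω) ↔ (a (a ω A) u = a ω B⁻¹) := by
    intro ω u
    have hx : a ω (A * u * B) = a (a (a ω A) u) B := by
      rw [ham (a ω A) u B, ham ω A (u*B), mul_assoc]
    rw [hx]
    constructor
    · intro h
      have h3 : a (a (a (a ω A) u) B) B⁻¹ = a ω B⁻¹ := by rw [h]
      rw [ham, mul_inv_cancel, ha1] at h3
      exact h3
    · intro h
      rw [h, ham, inv_mul_cancel, ha1]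
  have inner : ∀ ω : Ω, (∑ u : G, if a ω (A * u * B) = ω then (1:ℝ) else 0)
      = (Fintype.card G : ℝ) / (Fintype.card Ω : ℝ) := by
    intro ω
    have h1 : (∑ u : G, if a ω (A * u * B) = ω then (1:ℝ) else 0)
        = ∑ u : G, if a (a ω A) u = a ω B⁻¹ then (1:ℝ) else 0 := by
      refine Finset.sum_congr rfl fun u _ => ?_
      simp only [cond ω u]
    have h2 := fiber_sum ha1 ham htrans (a ω A) (a ω B⁻¹)
    rw [h1, eq_div_iff hΩ, mul_comm]
    exact h2
  rw [Finset.sum_congr rfl fun ω _ => inner ω, Finset.sum_const, Finset.card_univ, nsmul_eq_mul]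
  field_simp

theorem fixsum_inv (ha1 : ∀ ω, a ω 1 = ω) (ham : ∀ ω g h, a (a ω g) h = a ω (g * h))
    (htrans : ∀ ω ω' : Ω, ∃ g, a ω g = ω') (hn : 0 < Fintype.card Ω) (A B : G) :
    ∑ u : G, Fixr a (A * u⁻¹ * B) = Fintype.card G := by
  rw [← fixsum ha1 ham htrans hn A B]
  exact Fintype.sum_equiv (Equiv.inv G) _ _ (fun u => rfl)


end Sec3

section Sec4


variable {G : Type} [Group G] [Fintype G]

def tt {d : ℕ} (s : Fin d → G) : Fin d ⊕ Fin d → G := Sum.elim s fun i => (s i)⁻¹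

def cls {d : ℕ} : Fin d ⊕ Fin d → Fin d := Sum.elim id id

def wpr {d : ℕ} (L : List (Fin d ⊕ Fin d)) (s : Fin d → G) : G := (L.map (tt s)).prod

theorem tt_update_ne {d : ℕ} {m : Fin d} {x : Fin d ⊕ Fin d} (hm : cls x ≠ m)
    (s : Fin d → G) (u : G) : tt (Function.update s m u) x = tt s x := by
  cases x with
  | inl j => simp only [tt, Sum.elim_inl]; rw [Function.update_of_ne (by simpa [cls] using hm)]
  | inr j => simp only [tt, Sum.elim_inr]; rw [Function.update_of_ne (by simpa [cls] using hm)]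

theorem wpr_update_count0 {d : ℕ} {m : Fin d} {L : List (Fin d ⊕ Fin d)}
    (h : (L.map cls).count m = 0) (s : Fin d → G) (u : G) :
    wpr L (Function.update s m u) = wpr L s := by
  induction L with
  | nil => rfl
  | cons x L ih =>
      rw [List.map_cons, List.count_cons] at h
      have hx : cls x ≠ m := by
        intro hc; simp [hc] at h
      have hL : (L.map cls).count m = 0 := by
        omega
      have hih := ih hL
      simp only [wpr, List.map_cons, List.prod_cons] at hih ⊢
      rw [tt_update_ne hx, hih]

theorem wpr_update_count1 {d : ℕ} {m : Fin d} {L : List (Fin d ⊕ Fin d)}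
    (h : (L.map cls).count m = 1) :
    ∃ (A B : (Fin d → G) → G) (e : Bool), (∀ s u, A (Function.update s m u) = A s) ∧
      (∀ s u, B (Function.update s m u) = B s) ∧
      (∀ s, wpr L s = A s * (if e then s m else (s m)⁻¹) * B s) := by
  induction L with
  | nil => simp at h
  | cons x L ih =>
      rw [List.map_cons, List.count_cons] at h
      by_cases hx : cls x = m
      · have hL : (L.map cls).count m = 0 := by
          simp [hx] at h; omega
        refine ⟨fun _ => 1, fun s => wpr L s, x.isLeft, fun s u => rfl,
          fun s u => wpr_update_count0 hL s u, fun s => ?_⟩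
        have hxval : tt s x = if x.isLeft then s m else (s m)⁻¹ := by
          cases x with
          | inl j =>
              have : j = m := by simpa [cls] using hx
              subst this; simp [tt]
          | inr j =>
              have : j = m := by simpa [cls] using hx
              subst this; simp [tt]
        simp only [wpr, List.map_cons, List.prod_cons, one_mul]
        rw [hxval]
      · have hL : (L.map cls).count m = 1 := by
          simp [hx] at h; omega
        obtain ⟨A, B, e, hA, hB, hw⟩ := ih hL
        refine ⟨fun s => tt s x * A s, B, e, fun s u => ?_, hB, fun s => ?_⟩
        · show tt (Function.update s m u) x * A (Function.update s m u) = tt s x * A s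
          rw [tt_update_ne hx, hA]
        · show wpr (x :: L) s = tt s x * A s * (if e then s m else (s m)⁻¹) * B s
          have : wpr (x :: L) s = tt s x * wpr L s := by
            simp only [wpr, List.map_cons, List.prod_cons]
          rw [this, hw s]
          simp only [mul_assoc]


end Sec4

section Sec5



theorem bad_count {d k : ℕ} (hk : 0 < k) :
    ((univ : Finset (Fin (2*k) → Fin d ⊕ Fin d)).filter
       (fun i => ∀ m : Fin d, ((List.ofFn i).map cls).count m ≠ 1)).card
    ≤ (∑ j ∈ Finset.range (k+1), d.choose j) * (2*k)^(2*k) := by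
  classical
  set Bad := ((univ : Finset (Fin (2*k) → Fin d ⊕ Fin d)).filter
       (fun i => ∀ m : Fin d, ((List.ofFn i).map cls).count m ≠ 1)) with hBad
  -- the encoding
  set enc : (Fin (2*k) → Fin d ⊕ Fin d) → Finset (Fin d) × (Fin (2*k) → Bool × Fin k) :=
    fun i => (((List.ofFn i).map cls).toFinset,
      fun j => ((i j).isLeft,
        ⟨min ((((List.ofFn i).map cls).toFinset.sort (·≤·)).idxOf (cls (i j))) (k-1),
          by omega⟩)) with henc
  -- counting target
  set Tgt := ((univ : Finset (Finset (Fin d))).filter (fun A => A.card ≤ k)) ×ˢ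
      (univ : Finset (Fin (2*k) → Bool × Fin k)) with hTgt
  -- card bound for sets of small card
  have hcardA : ∀ i ∈ Bad, (((List.ofFn i).map cls).toFinset.card) ≤ k := by
    intro i hi
    rw [hBad, Finset.mem_filter] at hi
    set l := (List.ofFn i).map cls with hl
    have hlen : l.length = 2*k := by
      rw [hl, List.length_map, List.length_ofFn]
    have hsum : ∑ m ∈ l.toFinset, l.count m = 2*k := by
      have := Multiset.toFinset_sum_count_eq (↑l : Multiset (Fin d))
      simpa [hlen] using this
    have hlb : ∀ m ∈ l.toFinset, 2 ≤ l.count m := by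
      intro m hm
      have h1 : 0 < l.count m := List.count_pos_iff.2 (List.mem_toFinset.1 hm)
      have h2 : l.count m ≠ 1 := hi.2 m
      omega
    have : 2 * l.toFinset.card ≤ ∑ m ∈ l.toFinset, l.count m := by
      calc 2 * l.toFinset.card = ∑ _m ∈ l.toFinset, 2 := by
            rw [Finset.sum_const, smul_eq_mul, mul_comm]
        _ ≤ ∑ m ∈ l.toFinset, l.count m := Finset.sum_le_sum hlb
    omega
  -- indexOf is small
  have hidx : ∀ i ∈ Bad, ∀ j, ((((List.ofFn i).map cls).toFinset.sort (·≤·)).idxOf (cls (i j)))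
      < ((List.ofFn i).map cls).toFinset.card := by
    intro i hi j
    have hmem : cls (i j) ∈ (((List.ofFn i).map cls).toFinset.sort (·≤·)) := by
      rw [Finset.mem_sort, List.mem_toFinset]
      exact List.mem_map_of_mem (f := cls) (List.mem_ofFn.2 ⟨j, rfl⟩)
    have := List.idxOf_lt_length_iff.2 hmem
    rwa [Finset.length_sort] at this
  -- injectivity on Bad
  have hinj : Set.InjOn enc Bad := by
    intro i hi i' hi' heq
    have hA : ((List.ofFn i).map cls).toFinset = ((List.ofFn i').map cls).toFinset :=
      congrArg Prod.fst heq
    funext j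
    have hfun := congrArg Prod.snd heq
    have hj := congrFun hfun j
    have hleft : (i j).isLeft = (i' j).isLeft := congrArg Prod.fst hj
    have hidxeq : (⟨min ((((List.ofFn i).map cls).toFinset.sort (·≤·)).idxOf (cls (i j))) (k-1), by omega⟩ : Fin k)
        = ⟨min ((((List.ofFn i').map cls).toFinset.sort (·≤·)).idxOf (cls (i' j))) (k-1), by omega⟩ :=
      congrArg Prod.snd hj
    have hii : i ∈ Bad := hi
    have hii' : i' ∈ Bad := hi'
    have h1 := hidx i hii j
    have h2 := hidx i' hii' j
    have hc1 := hcardA i hii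
    have hc2 := hcardA i' hii'
    have hval : ((((List.ofFn i).map cls).toFinset.sort (·≤·)).idxOf (cls (i j)))
        = ((((List.ofFn i').map cls).toFinset.sort (·≤·)).idxOf (cls (i' j))) := by
      have hv := congrArg Fin.val hidxeq
      simp only [Fin.val_mk] at hv
      omega
    -- recover the class
    have hclseq : cls (i j) = cls (i' j) := by
      have hmem1 : cls (i j) ∈ (((List.ofFn i).map cls).toFinset.sort (·≤·)) := by
        rw [Finset.mem_sort, List.mem_toFinset]
        exact List.mem_map_of_mem (f := cls) (List.mem_ofFn.2 ⟨j, rfl⟩)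
      have hmem2 : cls (i' j) ∈ (((List.ofFn i').map cls).toFinset.sort (·≤·)) := by
        rw [Finset.mem_sort, List.mem_toFinset]
        exact List.mem_map_of_mem (f := cls) (List.mem_ofFn.2 ⟨j, rfl⟩)
      have hsort : (((List.ofFn i').map cls).toFinset.sort (·≤·))
          = (((List.ofFn i).map cls).toFinset.sort (·≤·)) := by rw [hA]
      rw [hsort] at hmem2
      rw [hsort] at hval
      exact (List.idxOf_inj hmem1).1 hval
    -- recover the letter
    cases hx : i j with
    | inl p =>
        cases hx' : i' j with
        | inl q =>
            have : p = q := by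
              have := hclseq
              rw [hx, hx'] at this
              simpa [cls] using this
            rw [this]
        | inr q =>
            exfalso
            rw [hx, hx'] at hleft
            simp at hleft
    | inr p =>
        cases hx' : i' j with
        | inl q =>
            exfalso
            rw [hx, hx'] at hleft
            simp at hleft
        | inr q =>
            have : p = q := by
              have := hclseq
              rw [hx, hx'] at this
              simpa [cls] using this
            rw [this]
  -- map into target
  have hmaps : ∀ i ∈ Bad, enc i ∈ Tgt := by
    intro i hi
    rw [hTgt, Finset.mem_product]
    exact ⟨Finset.mem_filter.2 ⟨Finset.mem_univ _, hcardA i hi⟩, Finset.mem_univ _⟩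
  have hle := Finset.card_le_card_of_injOn enc hmaps hinj
  have hTgtcard : Tgt.card ≤ (∑ j ∈ Finset.range (k+1), d.choose j) * (2*k)^(2*k) := by
    rw [hTgt, Finset.card_product]
    have h1 : ((univ : Finset (Finset (Fin d))).filter (fun A => A.card ≤ k)).card
        ≤ ∑ j ∈ Finset.range (k+1), d.choose j := by
      rw [Finset.card_eq_sum_card_fiberwise
        (f := fun A : Finset (Fin d) => A.card) (t := Finset.range (k+1))
        (fun A hA => by
          rw [Finset.mem_coe, Finset.mem_filter] at hA
          exact Finset.mem_range.2 (Nat.lt_succ_of_le hA.2))]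
      refine Finset.sum_le_sum fun j _ => ?_
      have hsub : (((univ : Finset (Finset (Fin d))).filter (fun A => A.card ≤ k)).filter
          (fun A => A.card = j)) ⊆ Finset.powersetCard j univ := by
        intro A hA
        rw [Finset.mem_filter] at hA
        rw [Finset.mem_powersetCard_univ]
        exact hA.2
      calc (((univ : Finset (Finset (Fin d))).filter (fun A => A.card ≤ k)).filter
          (fun A => A.card = j)).card ≤ (Finset.powersetCard j (univ : Finset (Fin d))).card :=
            Finset.card_le_card hsub
        _ = d.choose j := by rw [Finset.card_powersetCard, Finset.card_univ, Fintype.card_fin]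
    have h2 : (univ : Finset (Fin (2*k) → Bool × Fin k)).card = (2*k)^(2*k) := by
      rw [Finset.card_univ, Fintype.card_fun, Fintype.card_prod, Fintype.card_bool,
        Fintype.card_fin, Fintype.card_fin]
    calc _ ≤ (∑ j ∈ Finset.range (k+1), d.choose j) * (univ : Finset (Fin (2*k) → Bool × Fin k)).card :=
          Nat.mul_le_mul_right _ h1
      _ = _ := by rw [h2]
  exact le_trans hle hTgtcard


end Sec5


section GoodWord
variable {G : Type} [Group G] [Fintype G]

theorem good_word_sum {Ω : Type} [Fintype Ω] {a : Ω → G → Ω} (ha1 : ∀ ω, a ω 1 = ω)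
    (ham : ∀ ω g h, a (a ω g) h = a ω (g * h))
    (htrans : ∀ ω ω' : Ω, ∃ g, a ω g = ω') (hn : 0 < Fintype.card Ω)
    {d : ℕ} {L : List (Fin d ⊕ Fin d)} {m : Fin d} (h : (L.map cls).count m = 1) :
    ∑ s : Fin d → G, Fixr a (wpr L s) = ∑ s : Fin d → G, (1:ℝ) := by
  obtain ⟨A, B, e, hA, hB, hw⟩ := wpr_update_count1 (G := G) h
  set E := (Equiv.piSplitAt m (fun _ : Fin d => G)).symm with hE
  rw [← Equiv.sum_comp E (fun s => Fixr a (wpr L s)), ← Equiv.sum_comp E (fun _ => (1:ℝ))]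
  rw [Fintype.sum_prod_type, Fintype.sum_prod_type]
  rw [Finset.sum_comm]
  conv_rhs => rw [Finset.sum_comm]
  refine Finset.sum_congr rfl fun r _ => ?_
  have hkey : ∀ u : G, E (u, r) = Function.update (E (1, r)) m u := by
    intro u
    funext j
    by_cases hj : j = m
    · subst hj
      simp [hE, Equiv.piSplitAt, Function.update]
    · simp [hE, Equiv.piSplitAt, Function.update, hj]
  set s₀ := E (1, r) with hs₀
  have hterm : ∀ u : G, Fixr a (wpr L (E (u, r)))
      = Fixr a (A s₀ * (if e then u else u⁻¹) * B s₀) := by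
    intro u
    rw [hkey u, hw, hA, hB, Function.update_self]
  rw [Finset.sum_congr rfl fun u _ => hterm u]
  have hrhs : ∑ _u : G, (1:ℝ) = Fintype.card G := by simp
  rw [hrhs]
  cases e with
  | true => simpa using fixsum ha1 ham htrans hn (A s₀) (B s₀)
  | false => simpa using fixsum_inv ha1 ham htrans hn (A s₀) (B s₀)

end GoodWord

section Main
variable {Ω G : Type} [Fintype Ω] [Group G] [Fintype G] {a : Ω → G → Ω} {d : ℕ}

/-- the averaging matrix of the symmetrized tuple -/
noncomputable def Mc (a : Ω → G → Ω) {d : ℕ} (s : Fin d → G) : Matrix Ω Ω ℝ :=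
  ((Fintype.card (Fin d ⊕ Fin d) : ℝ))⁻¹ • ∑ x : Fin d ⊕ Fin d, Pm a (tt s x)

theorem Mc_mulVec (s : Fin d → G) (v : Ω → ℝ) (ω : Ω) :
    (Mc a s).mulVec v ω = (Fintype.card (Fin d ⊕ Fin d) : ℝ)⁻¹ * ∑ x, v (a ω (tt s x)) := by
  simp only [Mc, Matrix.smul_mulVec, Pi.smul_apply, smul_eq_mul]
  congr 1
  simp only [Matrix.mulVec, dotProduct, Matrix.sum_apply, Finset.sum_mul]
  rw [Finset.sum_comm]
  refine Finset.sum_congr rfl fun x _ => ?_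
  have := Pm_mulVec (a := a) (tt s x) v ω
  simpa [Matrix.mulVec, dotProduct] using this

theorem Mc_transpose (ha1 : ∀ ω, a ω 1 = ω) (ham : ∀ ω g h, a (a ω g) h = a ω (g * h))
    (s : Fin d → G) : (Mc a s)ᵀ = Mc a s := by
  unfold Mc
  rw [Matrix.transpose_smul, Matrix.transpose_sum]
  congr 1
  calc ∑ x, (Pm a (tt s x))ᵀ = ∑ x, Pm a (tt s (Equiv.sumComm (Fin d) (Fin d) x)) := by
        refine Finset.sum_congr rfl fun x _ => ?_
        rw [Pm_transpose ha1 ham]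
        congr 1
        cases x with
        | inl j => simp [tt]
        | inr j => simp [tt]
    _ = ∑ x, Pm a (tt s x) := Fintype.sum_equiv (Equiv.sumComm _ _) _ _ (fun x => rfl)

theorem card_sum_pos (hd : 0 < d) : 0 < Fintype.card (Fin d ⊕ Fin d) := by
  simp only [Fintype.card_sum, Fintype.card_fin]
  omega

theorem Mc_rowsum (hd : 0 < d) (s : Fin d → G) (ω : Ω) : ∑ σ, Mc a s ω σ = 1 := by
  have h : ∑ σ, (∑ x : Fin d ⊕ Fin d, Pm a (tt s x)) ω σ
      = (Fintype.card (Fin d ⊕ Fin d) : ℝ) := by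
    simp only [Matrix.sum_apply]
    rw [Finset.sum_comm]
    rw [Finset.sum_congr rfl fun x _ => Pm_rowsum (a := a) (tt s x) ω]
    simp
  simp only [Mc, Matrix.smul_apply, smul_eq_mul]
  rw [← Finset.mul_sum, h, inv_mul_cancel₀]
  have := card_sum_pos (d := d) hd
  positivity

theorem Mc_pow_trace (ha1 : ∀ ω, a ω 1 = ω) (ham : ∀ ω g h, a (a ω g) h = a ω (g * h))
    (s : Fin d → G) (K : ℕ) :
    ((Mc a s)^K).trace
      = ((Fintype.card (Fin d ⊕ Fin d) : ℝ)⁻¹)^K *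
          ∑ i : Fin K → Fin d ⊕ Fin d, Fixr a (wpr (List.ofFn i) s) := by
  unfold Mc
  rw [smul_pow, Matrix.trace_smul, smul_eq_mul]
  congr 1
  rw [sum_pow_list (fun x => Pm a (tt s x)) K, Matrix.trace_sum]
  refine Finset.sum_congr rfl fun i _ => ?_
  have h1 : (List.ofFn fun j => Pm a (tt s (i j))) = ((List.ofFn i).map (tt s)).map (Pm a) := by
    rw [List.map_map, List.map_ofFn]
    rfl
  rw [h1, ← Pm_listProd ha1 ham, Pm_trace]
  rfl

/-- deviation functional -/
noncomputable def Ffun (a : Ω → G → Ω) {d : ℕ} (k : ℕ) (s : Fin d → G) : ℝ :=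
  ∑ ω, ∑ σ, (((Mc a s)^k) ω σ - (Fintype.card Ω : ℝ)⁻¹)^2

theorem Ffun_nonneg (k : ℕ) (s : Fin d → G) : 0 ≤ Ffun a k s :=
  Finset.sum_nonneg fun _ _ => Finset.sum_nonneg fun _ _ => sq_nonneg _

theorem F_eq_trace (ha1 : ∀ ω, a ω 1 = ω) (ham : ∀ ω g h, a (a ω g) h = a ω (g * h))
    (hd : 0 < d) (hΩ : 0 < Fintype.card Ω) (s : Fin d → G) (k : ℕ) :
    Ffun a k s = ((Mc a s)^(2*k)).trace - 1 := by
  set n : ℕ := Fintype.card Ω with hn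
  have hnR : (0:ℝ) < n := by exact_mod_cast hΩ
  set B := (Mc a s)^k with hB
  have hBsym : Bᵀ = B := by rw [hB, Matrix.transpose_pow, Mc_transpose ha1 ham]
  have hrow : ∀ ω, ∑ σ, B ω σ = 1 := fun ω => rowsum_pow (Mc_rowsum hd s) k ω
  have hsym' : ∀ ω σ, B σ ω = B ω σ := by
    intro ω σ
    have := congrFun (congrFun hBsym ω) σ
    simpa [Matrix.transpose_apply] using this
  have htr : ((Mc a s)^(2*k)).trace = ∑ ω, ∑ σ, B ω σ * B ω σ := by
    rw [two_mul, pow_add, ← hB]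
    simp only [Matrix.trace, Matrix.diag_apply, Matrix.mul_apply]
    exact Finset.sum_congr rfl fun ω _ => Finset.sum_congr rfl fun σ _ => by rw [hsym' ω σ]
  have hper : ∀ ω, ∑ σ, (B ω σ - (n:ℝ)⁻¹)^2
      = (∑ σ, B ω σ * B ω σ) - 2*(n:ℝ)⁻¹ + (n:ℝ)*((n:ℝ)⁻¹)^2 := by
    intro ω
    have hterm : ∀ σ : Ω, (B ω σ - (n:ℝ)⁻¹)^2
        = B ω σ * B ω σ - 2*(n:ℝ)⁻¹*B ω σ + ((n:ℝ)⁻¹)^2 := fun σ => by ring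
    rw [Finset.sum_congr rfl fun σ _ => hterm σ]
    rw [Finset.sum_add_distrib, Finset.sum_sub_distrib, ← Finset.mul_sum, hrow ω,
      Finset.sum_const, Finset.card_univ, nsmul_eq_mul, mul_one, ← hn]
  have heq : Ffun a k s = (∑ ω, ∑ σ, B ω σ * B ω σ)
      - (n:ℝ)*(2*(n:ℝ)⁻¹) + (n:ℝ)*((n:ℝ)*((n:ℝ)⁻¹)^2) := by
    unfold Ffun
    rw [← hB, ← hn]
    rw [Finset.sum_congr rfl fun ω _ => hper ω]
    rw [Finset.sum_add_distrib, Finset.sum_sub_distrib, Finset.sum_const, Finset.sum_const,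
      Finset.card_univ, nsmul_eq_mul, nsmul_eq_mul, ← hn]
  rw [heq, htr]
  have hne : (n:ℝ) ≠ 0 := ne_of_gt hnR
  field_simp
  try ring

end Main

section Bound
variable {Ω G : Type} [Fintype Ω] [Group G] [Fintype G] {a : Ω → G → Ω} {d : ℕ}

theorem lambda_nonneg (t : Fin d ⊕ Fin d → G) : 0 ≤ lambdaSch a t := by
  apply Real.sSup_nonneg
  rintro r ⟨v, hv0, hvne, rfl⟩
  exact div_nonneg (abs_nonneg _) (Finset.sum_nonneg fun ω _ => mul_self_nonneg _)

theorem lambda_le_rpow (ha1 : ∀ ω, a ω 1 = ω) (ham : ∀ ω g h, a (a ω g) h = a ω (g * h))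
    (hd : 0 < d) (hΩ : 0 < Fintype.card Ω) (s : Fin d → G) (m : ℕ) :
    lambdaSch a (tt s) ≤ (Ffun a (2^m) s) ^ (((2*2^m : ℕ) : ℝ))⁻¹ := by
  classical
  set n : ℕ := Fintype.card Ω with hn
  set k : ℕ := 2^m with hk
  set K : ℕ := 2*k with hK
  have hk0 : 0 < k := Nat.pow_pos (by norm_num)
  have hK1 : 1 ≤ K := by omega
  have hF0 : 0 ≤ Ffun a k s := Ffun_nonneg k s
  apply Real.sSup_le
  · rintro r ⟨v, hv0, hvne, rfl⟩
    set D := ∑ ω, v ω * v ω with hD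
    have hD0 : 0 < D := by
      obtain ⟨ω, hω⟩ : ∃ ω, v ω ≠ 0 := by
        by_contra hcon
        push_neg at hcon
        exact hvne (funext hcon)
      exact Finset.sum_pos' (fun _ _ => mul_self_nonneg _)
        ⟨ω, Finset.mem_univ _, mul_self_pos.2 hω⟩
    set X := ∑ ω, (Mc a s).mulVec v ω * v ω with hX
    have hXeq : (∑ ω, ((Fintype.card (Fin d ⊕ Fin d) : ℝ)⁻¹ * ∑ x, v (a ω (tt s x))) * v ω)
        = X := by
      rw [hX]
      exact (Finset.sum_congr rfl fun ω _ => by rw [Mc_mulVec]).symm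
    rw [hXeq]
    -- the Cauchy–Schwarz chain
    have hchain := cs_chain (Mc a s) (Mc_transpose ha1 ham s) v m
    have hKpow : (2:ℕ)^(m+1) = K := by rw [hK, hk, pow_succ']
    rw [hKpow] at hchain
    set q := ∑ ω, ((Mc a s ^ K).mulVec v) ω * v ω with hq
    set B := Mc a s ^ k with hB
    have hsplit : q = ∑ ω, B.mulVec v ω * B.mulVec v ω := by
      rw [hq, hB, show K = k + k by omega]
      exact dot_pow_split (Mc a s) (Mc_transpose ha1 ham s) v k
    have hNv : ∀ ω, B.mulVec v ω = ∑ σ, (B ω σ - (n:ℝ)⁻¹) * v σ := by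
      intro ω
      have hrw : ∑ σ, (B ω σ - (n:ℝ)⁻¹) * v σ
          = (∑ σ, B ω σ * v σ) - (n:ℝ)⁻¹ * ∑ σ, v σ := by
        rw [Finset.mul_sum, ← Finset.sum_sub_distrib]
        exact Finset.sum_congr rfl fun σ _ => by ring
      rw [hrw, hv0, mul_zero, sub_zero]
      rfl
    have hqF : q ≤ Ffun a k s * D := by
      rw [hsplit]
      have step1 : ∀ ω : Ω, B.mulVec v ω * B.mulVec v ω
          = (∑ σ, (B ω σ - (n:ℝ)⁻¹) * v σ)^2 := fun ω => by rw [hNv ω]; ring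
      rw [Finset.sum_congr rfl fun ω _ => step1 ω]
      have step2 : ∀ ω : Ω, (∑ σ, (B ω σ - (n:ℝ)⁻¹) * v σ)^2
          ≤ (∑ σ, (B ω σ - (n:ℝ)⁻¹)^2) * (∑ σ, v σ^2) := fun ω =>
        Finset.sum_mul_sq_le_sq_mul_sq univ _ _
      calc ∑ ω, (∑ σ, (B ω σ - (n:ℝ)⁻¹) * v σ)^2
          ≤ ∑ ω, (∑ σ, (B ω σ - (n:ℝ)⁻¹)^2) * (∑ σ, v σ^2) :=
            Finset.sum_le_sum fun ω _ => step2 ω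
        _ = Ffun a k s * D := by
            rw [← Finset.sum_mul]
            congr 1
            exact Finset.sum_congr rfl fun σ _ => pow_two (v σ)
    have hXK : X^K ≤ Ffun a k s * D^K := by
      calc X^K ≤ q * D^(K-1) := hchain
        _ ≤ (Ffun a k s * D) * D^(K-1) :=
            mul_le_mul_of_nonneg_right hqF (pow_nonneg hD0.le _)
        _ = Ffun a k s * D^K := by
            rw [mul_assoc]
            congr 1
            rw [← pow_succ']
            congr 1
            omega
    have habs : |X|^K = X^K := by
      rw [pow_abs]
      exact abs_of_nonneg (Even.pow_nonneg ⟨k, by omega⟩ X)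
    have hrK : (|X| / D)^K ≤ Ffun a k s := by
      rw [div_pow, habs, div_le_iff₀ (by positivity)]
      exact hXK
    have hr0 : 0 ≤ |X| / D := div_nonneg (abs_nonneg _) hD0.le
    have hKR : ((K:ℝ)) ≠ 0 := by positivity
    calc |X| / D = ((|X|/D)^K) ^ ((K:ℝ))⁻¹ := by
          rw [← Real.rpow_natCast (|X|/D) K, ← Real.rpow_mul hr0, mul_inv_cancel₀ hKR,
            Real.rpow_one]
      _ ≤ (Ffun a k s) ^ (((K:ℕ) : ℝ))⁻¹ :=
          Real.rpow_le_rpow (pow_nonneg hr0 K) hrK (by positivity)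
  · exact Real.rpow_nonneg hF0 _

theorem expect_F (ha1 : ∀ ω, a ω 1 = ω) (ham : ∀ ω g h, a (a ω g) h = a ω (g * h))
    (htrans : ∀ ω ω' : Ω, ∃ g, a ω g = ω') (hΩ : 0 < Fintype.card Ω)
    (hd : 0 < d) {k : ℕ} (hk : 0 < k) :
    ∑ s : Fin d → G, Ffun a k s ≤
      ((Fintype.card (Fin d ⊕ Fin d) : ℝ)⁻¹)^(2*k) *
        (((∑ j ∈ Finset.range (k+1), d.choose j) * (2*k)^(2*k) : ℕ) : ℝ) *
        ((Fintype.card Ω : ℝ) - 1) * (Fintype.card (Fin d → G) : ℝ) := by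
  classical
  set n : ℕ := Fintype.card Ω with hn
  set c : ℝ := (Fintype.card (Fin d ⊕ Fin d) : ℝ)⁻¹ with hc
  set K : ℕ := 2*k with hK
  have hcardpos := card_sum_pos (d := d) hd
  have hc0 : 0 ≤ c := by positivity
  have hcmul : c * (Fintype.card (Fin d ⊕ Fin d) : ℝ) = 1 := by
    rw [hc, inv_mul_cancel₀]
    positivity
  set CG : ℝ := (Fintype.card (Fin d → G) : ℝ) with hCG
  have h1 : ∀ s : Fin d → G, Ffun a k s
      = c^K * (∑ i : Fin K → Fin d ⊕ Fin d, Fixr a (wpr (List.ofFn i) s)) - 1 := fun s => by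
    rw [F_eq_trace ha1 ham hd hΩ s k, Mc_pow_trace ha1 ham s (2*k)]
  rw [Finset.sum_congr rfl fun s _ => h1 s, Finset.sum_sub_distrib, ← Finset.mul_sum,
    Finset.sum_comm]
  simp only [Finset.sum_const, Finset.card_univ, nsmul_eq_mul, mul_one]
  -- now: c^K * ∑_i (∑_s Fixr) - CG ≤ bound
  have hNI : (Fintype.card (Fin K → Fin d ⊕ Fin d) : ℝ) = (Fintype.card (Fin d ⊕ Fin d) : ℝ)^K := by
    rw [Fintype.card_fun, Fintype.card_fin]
    push_cast
    rfl
  have hCGsub : (Fintype.card (Fin d → G) : ℝ)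
      = c^K * ∑ _i : Fin K → Fin d ⊕ Fin d, CG := by
    rw [Finset.sum_const, Finset.card_univ, nsmul_eq_mul, hNI, ← mul_assoc]
    rw [← mul_pow, hcmul, one_pow, one_mul, hCG]
  rw [hCGsub, ← mul_sub, ← Finset.sum_sub_distrib]
  -- bound the sum over words
  set P : (Fin K → Fin d ⊕ Fin d) → Prop :=
    fun i => ∀ m : Fin d, ((List.ofFn i).map cls).count m ≠ 1 with hP
  have hsplitsum : (∑ i : Fin K → Fin d ⊕ Fin d,
        ((∑ s : Fin d → G, Fixr a (wpr (List.ofFn i) s)) - CG))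
      = ∑ i ∈ univ.filter P, ((∑ s : Fin d → G, Fixr a (wpr (List.ofFn i) s)) - CG)
        + ∑ i ∈ univ.filter (fun i => ¬ P i),
            ((∑ s : Fin d → G, Fixr a (wpr (List.ofFn i) s)) - CG) :=
    (Finset.sum_filter_add_sum_filter_not univ P _).symm
  have hgood : ∀ i ∈ univ.filter (fun i => ¬ P i),
      ((∑ s : Fin d → G, Fixr a (wpr (List.ofFn i) s)) - CG) = 0 := by
    intro i hi
    rw [Finset.mem_filter] at hi
    have hex : ∃ m : Fin d, ((List.ofFn i).map cls).count m = 1 := by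
      by_contra hcon
      push_neg at hcon
      exact hi.2 hcon
    obtain ⟨m, hm⟩ := hex
    rw [good_word_sum ha1 ham htrans hΩ hm]
    simp [hCG]
  have hbadterm : ∀ i : Fin K → Fin d ⊕ Fin d,
      ((∑ s : Fin d → G, Fixr a (wpr (List.ofFn i) s)) - CG) ≤ ((n:ℝ) - 1) * CG := by
    intro i
    have h2 : (∑ s : Fin d → G, Fixr a (wpr (List.ofFn i) s)) ≤ ∑ _s : Fin d → G, (n:ℝ) :=
      Finset.sum_le_sum fun s _ => Fixr_le_card _
    rw [Finset.sum_const, Finset.card_univ, nsmul_eq_mul] at h2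
    rw [sub_le_iff_le_add]
    calc (∑ s : Fin d → G, Fixr a (wpr (List.ofFn i) s)) ≤ CG * (n:ℝ) := by
          rw [hCG]; exact h2
      _ = ((n:ℝ) - 1) * CG + CG := by ring
  have hT := bad_count (d := d) (k := k) hk
  have hbound : (∑ i ∈ univ.filter P, ((∑ s : Fin d → G, Fixr a (wpr (List.ofFn i) s)) - CG))
      ≤ (((∑ j ∈ Finset.range (k+1), d.choose j) * (2*k)^(2*k) : ℕ) : ℝ) * (((n:ℝ) - 1) * CG) := by
    have hCG0 : (0:ℝ) ≤ CG := by rw [hCG]; positivity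
    have hn1 : (0:ℝ) ≤ (n:ℝ) - 1 := by
      have : (1:ℕ) ≤ n := hΩ
      have : (1:ℝ) ≤ (n:ℝ) := by exact_mod_cast this
      linarith
    calc (∑ i ∈ univ.filter P, ((∑ s : Fin d → G, Fixr a (wpr (List.ofFn i) s)) - CG))
        ≤ ∑ _i ∈ univ.filter P, (((n:ℝ) - 1) * CG) :=
          Finset.sum_le_sum fun i _ => hbadterm i
      _ = ((univ.filter P).card : ℝ) * (((n:ℝ) - 1) * CG) := by
          rw [Finset.sum_const, nsmul_eq_mul]
      _ ≤ (((∑ j ∈ Finset.range (k+1), d.choose j) * (2*k)^(2*k) : ℕ) : ℝ)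
            * (((n:ℝ) - 1) * CG) := by
          apply mul_le_mul_of_nonneg_right _ (mul_nonneg hn1 hCG0)
          have hcast : ((univ.filter P).card : ℝ)
              ≤ (((∑ j ∈ Finset.range (k+1), d.choose j) * (2*k)^(2*k) : ℕ) : ℝ) := by
            exact_mod_cast hT
          exact hcast
  calc c^K * (∑ i : Fin K → Fin d ⊕ Fin d,
        ((∑ s : Fin d → G, Fixr a (wpr (List.ofFn i) s)) - CG))
      ≤ c^K * ((((∑ j ∈ Finset.range (k+1), d.choose j) * (2*k)^(2*k) : ℕ) : ℝ)
          * (((n:ℝ) - 1) * CG)) := by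
        apply mul_le_mul_of_nonneg_left _ (pow_nonneg hc0 K)
        rw [hsplitsum, Finset.sum_congr rfl hgood]
        simpa using hbound
    _ = ((Fintype.card (Fin d ⊕ Fin d) : ℝ)⁻¹)^(2*k) *
        (((∑ j ∈ Finset.range (k+1), d.choose j) * (2*k)^(2*k) : ℕ) : ℝ) *
        ((Fintype.card Ω : ℝ) - 1) * (Fintype.card (Fin d → G) : ℝ) := by
        rw [← hc, ← hK, ← hn, ← hCG]
        ring

end Bound

section Numeric

theorem key_numeric {d k n : ℕ} {ε₀ : ℝ} (hk : 0 < k) (hkd : k ≤ d) (hn2 : 2 ≤ n)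
    (hε₀ : 0 < ε₀) (hε₀1 : ε₀ ≤ 1) (hexp : (n:ℝ) ≤ Real.exp k)
    (h18 : 18 * (k:ℝ) ≤ ε₀^2 * d) :
    ((2*(d:ℝ))⁻¹)^(2*k) * (((∑ j ∈ Finset.range (k+1), d.choose j) * (2*k)^(2*k) : ℕ) : ℝ)
      * ((n:ℝ) - 1) ≤ ε₀^(2*k) := by
  have hd0 : 0 < d := lt_of_lt_of_le hk hkd
  have hdR : (0:ℝ) < d := by exact_mod_cast hd0
  have hkR : (0:ℝ) < k := by exact_mod_cast hk
  have hnR : (2:ℝ) ≤ n := by exact_mod_cast hn2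
  have hfac : (0:ℝ) < (k.factorial : ℝ) := by exact_mod_cast k.factorial_pos
  set S : ℕ := ∑ j ∈ Finset.range (k+1), d.choose j with hS
  -- natural-number bound : S * k! ≤ (k+1) * d^k
  have hSnat : S * k.factorial ≤ (k+1) * d^k := by
    rw [hS, Finset.sum_mul]
    have hper : ∀ j ∈ Finset.range (k+1), d.choose j * k.factorial ≤ d^k := by
      intro j hj
      have hjk : j ≤ k := by
        have := Finset.mem_range.1 hj
        omega
      have h1 : j.factorial * (d.choose j * k.factorial) ≤ j.factorial * d^k := by
        calc j.factorial * (d.choose j * k.factorial)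
            = (j.factorial * d.choose j) * k.factorial := by ring
          _ = d.descFactorial j * k.factorial := by
              rw [Nat.descFactorial_eq_factorial_mul_choose]
          _ ≤ d^j * k.factorial := Nat.mul_le_mul_right _ (Nat.descFactorial_le_pow d j)
          _ ≤ d^k * j.factorial := fact_ratio hjk hkd
          _ = j.factorial * d^k := Nat.mul_comm _ _
      exact Nat.le_of_mul_le_mul_left h1 j.factorial_pos
    calc ∑ j ∈ Finset.range (k+1), d.choose j * k.factorial
        ≤ ∑ _j ∈ Finset.range (k+1), d^k := Finset.sum_le_sum hper
      _ = (k+1) * d^k := by rw [Finset.sum_const, Finset.card_range, smul_eq_mul]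
  have hSreal : (S:ℝ) * (k.factorial : ℝ) ≤ ((k:ℝ)+1) * (d:ℝ)^k := by
    have := hSnat
    exact_mod_cast this
  -- real bounds
  have hexp3 : Real.exp 1 ≤ 3 := by
    have := Real.exp_one_lt_d9
    linarith
  have hA2 : (n:ℝ) ≤ (3:ℝ)^k := by
    calc (n:ℝ) ≤ Real.exp k := hexp
      _ = Real.exp 1 ^ k := by rw [← Real.exp_one_pow]
      _ ≤ (3:ℝ)^k := pow_le_pow_left₀ (Real.exp_pos 1).le hexp3 k
  have hA3 : (k:ℝ) + 1 ≤ (2:ℝ)^k := by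
    have h1 : k + 1 ≤ 2^k := Nat.lt_two_pow_self
    exact_mod_cast h1
  have hA4 : (k:ℝ)^k ≤ (3:ℝ)^k * (k.factorial : ℝ) := pow_self_le_fact k
  have hA5 : ((18:ℝ)*(k:ℝ))^k ≤ (ε₀^2*(d:ℝ))^k :=
    pow_le_pow_left₀ (by positivity) h18 k
  -- power algebra
  have e1 : ((2:ℝ)*(k:ℝ))^(2*k) = (2:ℝ)^(2*k) * ((k:ℝ)^k * (k:ℝ)^k) := by
    rw [mul_pow, show (k:ℝ)^(2*k) = (k:ℝ)^k*(k:ℝ)^k by rw [two_mul, pow_add]]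
  have e2 : ((2:ℝ)*(d:ℝ))^(2*k) = (2:ℝ)^(2*k) * ((d:ℝ)^k * (d:ℝ)^k) := by
    rw [mul_pow, show (d:ℝ)^(2*k) = (d:ℝ)^k*(d:ℝ)^k by rw [two_mul, pow_add]]
  have e3 : (ε₀^2)^k = ε₀^(2*k) := (pow_mul ε₀ 2 k).symm
  have e4 : ((18:ℝ)*(k:ℝ))^k = (2:ℝ)^k*(3:ℝ)^k*(3:ℝ)^k*(k:ℝ)^k := by
    rw [mul_pow]
    have : (18:ℝ)^k = (2:ℝ)^k*(3:ℝ)^k*(3:ℝ)^k := by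
      rw [← mul_pow, ← mul_pow]
      norm_num
    rw [this]
  have e5 : (ε₀^2*(d:ℝ))^k = ε₀^(2*k) * (d:ℝ)^k := by rw [mul_pow, e3]
  -- main chain, multiplied by k!
  have goal3 : (S:ℝ) * ((2:ℝ)*(k:ℝ))^(2*k) * ((n:ℝ) - 1) * (k.factorial : ℝ)
      ≤ ε₀^(2*k) * ((2:ℝ)*(d:ℝ))^(2*k) * (k.factorial : ℝ) := by
    have hU0 : (0:ℝ) ≤ ((2:ℝ)*(k:ℝ))^(2*k) * (n:ℝ) := by positivity
    have hS0 : (0:ℝ) ≤ (S:ℝ) * (k.factorial : ℝ) := by positivity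
    calc (S:ℝ) * ((2:ℝ)*(k:ℝ))^(2*k) * ((n:ℝ) - 1) * (k.factorial : ℝ)
        = ((S:ℝ) * (k.factorial : ℝ)) * (((2:ℝ)*(k:ℝ))^(2*k) * ((n:ℝ) - 1)) := by ring
      _ ≤ ((S:ℝ) * (k.factorial : ℝ)) * (((2:ℝ)*(k:ℝ))^(2*k) * (n:ℝ)) := by
          apply mul_le_mul_of_nonneg_left _ hS0
          apply mul_le_mul_of_nonneg_left _ (by positivity)
          linarith
      _ ≤ (((k:ℝ)+1) * (d:ℝ)^k) * (((2:ℝ)*(k:ℝ))^(2*k) * (n:ℝ)) :=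
          mul_le_mul_of_nonneg_right hSreal hU0
      _ ≤ ((2:ℝ)^k * (d:ℝ)^k) * (((2:ℝ)*(k:ℝ))^(2*k) * (n:ℝ)) :=
          mul_le_mul_of_nonneg_right (mul_le_mul_of_nonneg_right hA3 (by positivity)) hU0
      _ = ((2:ℝ)^k * (d:ℝ)^k * (2:ℝ)^(2*k)) * (((k:ℝ)^k * (k:ℝ)^k) * (n:ℝ)) := by
          rw [e1]; ring
      _ ≤ ((2:ℝ)^k * (d:ℝ)^k * (2:ℝ)^(2*k)) *
            (((k:ℝ)^k * ((3:ℝ)^k * (k.factorial : ℝ))) * (3:ℝ)^k) := by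
          apply mul_le_mul_of_nonneg_left _ (by positivity)
          apply mul_le_mul (mul_le_mul_of_nonneg_left hA4 (by positivity)) hA2
            (by positivity) (by positivity)
      _ = (((18:ℝ)*(k:ℝ))^k * (d:ℝ)^k * (2:ℝ)^(2*k)) * (k.factorial : ℝ) := by
          rw [e4]; ring
      _ ≤ ((ε₀^2*(d:ℝ))^k * (d:ℝ)^k * (2:ℝ)^(2*k)) * (k.factorial : ℝ) := by
          apply mul_le_mul_of_nonneg_right _ hfac.le
          apply mul_le_mul_of_nonneg_right (mul_le_mul_of_nonneg_right hA5 (by positivity))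
            (by positivity)
      _ = ε₀^(2*k) * ((2:ℝ)*(d:ℝ))^(2*k) * (k.factorial : ℝ) := by
          rw [e5, e2]; ring
  have goal2 : (S:ℝ) * ((2:ℝ)*(k:ℝ))^(2*k) * ((n:ℝ) - 1) ≤ ε₀^(2*k) * ((2:ℝ)*(d:ℝ))^(2*k) :=
    (mul_le_mul_iff_of_pos_right hfac).1 goal3
  -- divide
  have hcast : (((S * (2*k)^(2*k) : ℕ)) : ℝ) = (S:ℝ) * ((2:ℝ)*(k:ℝ))^(2*k) := by
    push_cast
    ring
  rw [hcast, inv_pow, mul_assoc, inv_mul_le_iff₀ (by positivity)]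
  calc (S:ℝ) * ((2:ℝ)*(k:ℝ))^(2*k) * ((n:ℝ) - 1)
      ≤ ε₀^(2*k) * ((2:ℝ)*(d:ℝ))^(2*k) := goal2
    _ = ((2:ℝ)*(d:ℝ))^(2*k) * ε₀^(2*k) := mul_comm _ _

end Numeric

end RSE

/-- **Random Schreier graphs are two-sided expanders.**
For every `ε > 0` there is `C_ε > 0` such that for every finite group `G` acting transitively
(on the right) on a finite set `Ω` with `|Ω| ≥ 2`, with `d = ⌈C_ε ⬝ ln |Ω|⌉`, the average over
all `d`-tuples `(s₁, …, s_d) ∈ G^d` of `λ(G ↺ Ω, S ⊔ S⁻¹)` is at most `ε`, where `S ⊔ S⁻¹` is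
the symmetric multiset `{s₁, …, s_d, s₁⁻¹, …, s_d⁻¹}` of size `2d`. -/
theorem random_schreier_graphs_are_expanders :
    ∀ ε : ℝ, 0 < ε → ∃ C : ℝ, 0 < C ∧
      ∀ (G Ω : Type) [Group G] [Fintype G] [Fintype Ω] (a : Ω → G → Ω),
        (∀ ω : Ω, a ω 1 = ω) →
        (∀ (ω : Ω) (g h : G), a (a ω g) h = a ω (g * h)) →
        (∀ ω ω' : Ω, ∃ g : G, a ω g = ω') →
        2 ≤ Fintype.card Ω →
        ∀ d : ℕ, d = ⌈C * Real.log (Fintype.card Ω)⌉₊ →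
          ((Fintype.card G : ℝ) ^ d)⁻¹ *
              ∑ s : Fin d → G, lambdaSch a (Sum.elim s (fun i => (s i)⁻¹)) ≤ ε := by
  classical
  intro ε hε
  set ε₀ : ℝ := min ε 1 with hε₀def
  have hε₀ : 0 < ε₀ := lt_min hε one_pos
  have hε₀1 : ε₀ ≤ 1 := min_le_right _ _
  have hε₀ε : ε₀ ≤ ε := min_le_left _ _
  refine ⟨90 / ε₀^2, by positivity, ?_⟩
  intro G Ω _ _ _ a ha1 ham htrans hΩ2 d hd
  set n : ℕ := Fintype.card Ω with hn
  have hΩ0 : 0 < n := by omega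
  have hnR2 : (2:ℝ) ≤ (n:ℝ) := by exact_mod_cast hΩ2
  have hlog2 : (0.6931471803 : ℝ) < Real.log 2 := Real.log_two_gt_d9
  have hlogn2 : Real.log 2 ≤ Real.log n := Real.log_le_log (by norm_num) hnR2
  have hlogpos : 0 < Real.log n := by linarith
  -- the moment parameter k = 2^m
  set K₀ : ℕ := ⌈Real.log n⌉₊ with hK₀
  have hK₀1 : 1 ≤ K₀ := by
    rw [hK₀]
    exact Nat.one_le_iff_ne_zero.2 (by
      intro hcon
      have := Nat.ceil_eq_zero.1 hcon
      linarith)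
  set m : ℕ := Nat.clog 2 K₀ with hm
  set k : ℕ := 2^m with hkdef
  have hk0 : 0 < k := by positivity
  have hkK₀ : K₀ ≤ k := Nat.le_pow_clog (by norm_num) K₀
  have hkub : k ≤ 2*K₀ := by
    rcases Nat.lt_or_ge K₀ 2 with hcase|hcase
    · have hK1 : K₀ = 1 := by omega
      have : m = 0 := by rw [hm, hK1, Nat.clog_one_right]
      rw [hkdef, this]
      omega
    · have hpred := Nat.pow_pred_clog_lt_self (b := 2) (by norm_num) (show 1 < K₀ by omega)
      have h0 : 0 < m := by
        rw [hm]
        exact Nat.clog_pos (by norm_num) (by omega)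
      have hms : m - 1 + 1 = m := by omega
      have h2 : 2^m ≤ 2 * 2^(m - 1) := le_of_eq (by
        calc 2^m = 2^(m-1+1) := by rw [hms]
          _ = 2^(m-1) * 2 := pow_succ 2 (m-1)
          _ = 2 * 2^(m-1) := Nat.mul_comm _ _)
      have hp : (2:ℕ)^(m-1) ≤ K₀ := by
        have h3 := hpred
        rw [Nat.pred_eq_sub_one, ← hm] at h3
        exact le_of_lt h3
      rw [hkdef]
      calc 2^m ≤ 2 * 2^(m-1) := h2
        _ ≤ 2 * K₀ := Nat.mul_le_mul le_rfl hp
  have hklogn : Real.log n ≤ (k:ℝ) := by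
    calc Real.log n ≤ (K₀:ℝ) := Nat.le_ceil _
      _ ≤ (k:ℝ) := by exact_mod_cast hkK₀
  have hkleR : (k:ℝ) ≤ 5 * Real.log n := by
    have h1 : (K₀:ℝ) < Real.log n + 1 := by
      rw [hK₀]
      exact Nat.ceil_lt_add_one hlogpos.le
    have h2 : (k:ℝ) ≤ 2*(K₀:ℝ) := by exact_mod_cast hkub
    linarith
  have hdlb : (90/ε₀^2) * Real.log n ≤ (d:ℝ) := by
    rw [hd]
    exact Nat.le_ceil _
  have h18 : 18 * (k:ℝ) ≤ ε₀^2 * d := by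
    have h1 : ε₀^2 * ((90/ε₀^2) * Real.log n) = 90 * Real.log n := by
      field_simp
    have h2 : ε₀^2 * ((90/ε₀^2) * Real.log n) ≤ ε₀^2 * d :=
      mul_le_mul_of_nonneg_left hdlb (by positivity)
    rw [h1] at h2
    linarith
  have hkd : k ≤ d := by
    have hkR : (0:ℝ) < k := by exact_mod_cast hk0
    have hsq : ε₀^2 ≤ 1 := by nlinarith
    have h1 : (k:ℝ) ≤ (d:ℝ) := by nlinarith [h18]
    exact_mod_cast h1
  have hd0 : 0 < d := lt_of_lt_of_le hk0 hkd
  set K : ℕ := 2*k with hK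
  have hK0 : 0 < K := by omega
  -- weights
  have hGpos : 0 < Fintype.card G := Fintype.card_pos
  set CG : ℝ := (Fintype.card G : ℝ)^d with hCG
  have hCGpos : 0 < CG := by
    rw [hCG]
    have : (0:ℝ) < (Fintype.card G : ℝ) := by exact_mod_cast hGpos
    positivity
  have hcardfun : (Fintype.card (Fin d → G) : ℝ) = CG := by
    rw [Fintype.card_fun, Fintype.card_fin, hCG]
    push_cast
    rfl
  -- Jensen
  have hw1 : ∑ _s : Fin d → G, CG⁻¹ = 1 := by
    rw [Finset.sum_const, Finset.card_univ, nsmul_eq_mul, hcardfun,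
      mul_inv_cancel₀ (ne_of_gt hCGpos)]
  have hjen := Real.pow_arith_mean_le_arith_mean_pow Finset.univ (fun _ => CG⁻¹)
    (fun s : Fin d → G => lambdaSch a (RSE.tt s)) (fun _ _ => (inv_nonneg.2 hCGpos.le))
    hw1 (fun s _ => RSE.lambda_nonneg _) K
  -- pointwise bound
  have hpoint : ∀ s : Fin d → G, (lambdaSch a (RSE.tt s))^K ≤ RSE.Ffun a k s := by
    intro s
    have h1 : lambdaSch a (RSE.tt s) ≤ (RSE.Ffun a k s) ^ (((K:ℕ) : ℝ))⁻¹ := by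
      have := RSE.lambda_le_rpow ha1 ham hd0 (by omega : 0 < Fintype.card Ω) s m
      rw [← hkdef] at this
      rw [hK]
      exact this
    have hF0 : 0 ≤ RSE.Ffun a k s := RSE.Ffun_nonneg k s
    have h2 : ((RSE.Ffun a k s) ^ (((K:ℕ):ℝ))⁻¹)^K = RSE.Ffun a k s := by
      rw [← Real.rpow_natCast ((RSE.Ffun a k s) ^ (((K:ℕ):ℝ))⁻¹) K, ← Real.rpow_mul hF0,
        inv_mul_cancel₀ (by positivity : ((K:ℕ):ℝ) ≠ 0), Real.rpow_one]
    calc (lambdaSch a (RSE.tt s))^K ≤ ((RSE.Ffun a k s) ^ (((K:ℕ):ℝ))⁻¹)^K :=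
          pow_le_pow_left₀ (RSE.lambda_nonneg _) h1 K
      _ = RSE.Ffun a k s := h2
  -- expectation bound
  have hexpF := RSE.expect_F ha1 ham htrans (by omega : 0 < Fintype.card Ω) hd0 hk0
  -- numeric bound
  have hcard2d : (Fintype.card (Fin d ⊕ Fin d) : ℝ) = 2*(d:ℝ) := by
    rw [Fintype.card_sum, Fintype.card_fin]
    push_cast
    ring
  have hexpk : (n:ℝ) ≤ Real.exp k := by
    calc (n:ℝ) = Real.exp (Real.log n) := by
          rw [Real.exp_log (by exact_mod_cast hΩ0)]
      _ ≤ Real.exp k := Real.exp_le_exp.2 hklogn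
  have hkey := RSE.key_numeric hk0 hkd hΩ2 hε₀ hε₀1 hexpk h18
  -- assemble
  have hsumF : ∑ s : Fin d → G, RSE.Ffun a k s ≤ ε₀^K * CG := by
    calc ∑ s : Fin d → G, RSE.Ffun a k s
        ≤ ((Fintype.card (Fin d ⊕ Fin d) : ℝ)⁻¹)^(2*k) *
            (((∑ j ∈ Finset.range (k+1), d.choose j) * (2*k)^(2*k) : ℕ) : ℝ) *
            ((Fintype.card Ω : ℝ) - 1) * (Fintype.card (Fin d → G) : ℝ) := hexpF
      _ = (((2*(d:ℝ))⁻¹)^(2*k) *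
            (((∑ j ∈ Finset.range (k+1), d.choose j) * (2*k)^(2*k) : ℕ) : ℝ) *
            ((n:ℝ) - 1)) * CG := by
          rw [hcard2d, hcardfun, ← hn]
      _ ≤ ε₀^(2*k) * CG := mul_le_mul_of_nonneg_right hkey hCGpos.le
      _ = ε₀^K * CG := by rw [hK]
  have hfinal : (∑ s : Fin d → G, CG⁻¹ * lambdaSch a (RSE.tt s))^K ≤ ε₀^K := by
    calc (∑ s : Fin d → G, CG⁻¹ * lambdaSch a (RSE.tt s))^K
        ≤ ∑ s : Fin d → G, CG⁻¹ * (lambdaSch a (RSE.tt s))^K := hjen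
      _ ≤ ∑ s : Fin d → G, CG⁻¹ * RSE.Ffun a k s :=
          Finset.sum_le_sum fun s _ =>
            mul_le_mul_of_nonneg_left (hpoint s) (inv_nonneg.2 hCGpos.le)
      _ = CG⁻¹ * ∑ s : Fin d → G, RSE.Ffun a k s := by rw [Finset.mul_sum]
      _ ≤ CG⁻¹ * (ε₀^K * CG) :=
          mul_le_mul_of_nonneg_left hsumF (inv_nonneg.2 hCGpos.le)
      _ = ε₀^K := by field_simp
  have hA0 : 0 ≤ ∑ s : Fin d → G, CG⁻¹ * lambdaSch a (RSE.tt s) :=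
    Finset.sum_nonneg fun s _ =>
      mul_nonneg (inv_nonneg.2 hCGpos.le) (RSE.lambda_nonneg _)
  have hAε₀ : ∑ s : Fin d → G, CG⁻¹ * lambdaSch a (RSE.tt s) ≤ ε₀ :=
    le_of_pow_le_pow_left₀ (by omega) hε₀.le hfinal
  calc ((Fintype.card G : ℝ) ^ d)⁻¹ *
        ∑ s : Fin d → G, lambdaSch a (Sum.elim s (fun i => (s i)⁻¹))
      = ∑ s : Fin d → G, CG⁻¹ * lambdaSch a (RSE.tt s) := by
        rw [Finset.mul_sum, hCG]
        rfl
    _ ≤ ε₀ := hAε₀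
    _ ≤ ε := hε₀ε
end

section
/- Let G be a finite group, Y ≤ H ≤ G subgroups, and S a symmetric multiset in G of size d ≥ 1 given by s₁,…,s_d. Let T ⊆ G be a right transversal of H in G (so G is the disjoint union of the cosets Ht, t ∈ T) and for x ∈ G let x̄ denote the unique element of T ∩ Hx. Let S̄ be the multiset in H indexed by T × {1,…,d} with entries t·s_i·(t·s_i)̄⁻¹. Let M_G be the averaging operator on functions on the right coset space Y\G, (M_G f)(Yg) = (1/d)·∑_i f(Y g s_i), and let M_H be the averaging operator on functions on Y\H, (M_H f)(Yh) = (1/(|T|·d))·∑_{t∈T}∑_i f(Y h t s_i (t s_i)̄⁻¹). If ε > 0 is such that ⟨M_G v, v⟩ ≤ (1−ε)·⟨v,v⟩ for every mean-zero v : Y\G → ℝ, then ⟨M_H f, f⟩ ≤ (1−ε)·⟨f,f⟩ for every mean-zero f : Y\H → ℝ. (That is, gap(H,Y,S̄) ≥ gap(G,Y,S).) -/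
open Finset

/-- Right multiplication action of `G` on the set `Y\G` of right cosets of `Y`. -/
def rmul {G : Type*} [Group G] (Y : Subgroup G)
    (q : Quotient (QuotientGroup.rightRel Y)) (g : G) :
    Quotient (QuotientGroup.rightRel Y) :=
  Quotient.map' (· * g)
    (fun a b h => by
      rw [QuotientGroup.rightRel_apply] at h ⊢
      simpa [mul_assoc] using h) q

noncomputable instance {α : Type*} [Finite α] (s : Setoid α) : Fintype (Quotient s) :=
  Fintype.ofFinite _

/-- Monotonicity of the spectral gap under the Reidemeister–Schreier rewriting:
if every mean-zero function `v` on `Y\G` satisfies `⟨M_G v, v⟩ ≤ (1−ε)⟨v,v⟩`, then every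
mean-zero function `f` on `Y\H` satisfies `⟨M_H f, f⟩ ≤ (1−ε)⟨f,f⟩`, where `M_G` is the
averaging operator of the multiset `S = (s₁, …, s_d)` on `Y\G` and `M_H` is the averaging
operator on `Y\H` of the Reidemeister–Schreier multiset
`S̄ = { t·sᵢ·(t·sᵢ)̄⁻¹ : t ∈ T, 1 ≤ i ≤ d }` attached to a right transversal `T` of `H`
(`x̄` denotes the unique element of `T ∩ Hx`).  That is, `gap(H,Y,S̄) ≥ gap(G,Y,S)`. -/
theorem gap_reidemeister_schreier
    {G : Type*} [Group G] [Fintype G] (H Y : Subgroup G) (hYH : Y ≤ H)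
    (d : ℕ) (hd : 1 ≤ d) (s : Fin d → G)
    (σ : Fin d → Fin d) (hσ : ∀ i, σ (σ i) = i) (hsσ : ∀ i, s (σ i) = (s i)⁻¹)
    (T : Finset G) (bar : G → G)
    (hT : ∀ x : G, ∃! t, t ∈ T ∧ x * t⁻¹ ∈ H)
    (hbar : ∀ x : G, bar x ∈ T ∧ x * (bar x)⁻¹ ∈ H)
    (ε : ℝ)
    (hgap : ∀ v : Quotient (QuotientGroup.rightRel Y) → ℝ, (∑ q, v q) = 0 →
      (∑ q, ((d : ℝ)⁻¹ * ∑ i, v (rmul Y q (s i))) * v q) ≤ (1 - ε) * ∑ q, v q * v q) :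
    ∀ f : Quotient (QuotientGroup.rightRel (Y.subgroupOf H)) → ℝ, (∑ q, f q) = 0 →
      (∑ q, (((T.card : ℝ) * (d : ℝ))⁻¹ *
          ∑ t ∈ T, ∑ i, f (rmul (Y.subgroupOf H) q
            ⟨t * s i * (bar (t * s i))⁻¹, (hbar (t * s i)).2⟩)) * f q) ≤
        (1 - ε) * ∑ q, f q * f q := by
  intro f hf
  -- basic facts about `bar`
  have hbar_eq : ∀ x t, t ∈ T → x * t⁻¹ ∈ H → bar x = t := by
    intro x t ht hx
    obtain ⟨u, _, huniq⟩ := hT x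
    exact (huniq _ ⟨(hbar x).1, (hbar x).2⟩).trans (huniq t ⟨ht, hx⟩).symm
  have hbarH : ∀ h x : G, h ∈ H → bar (h * x) = bar x := by
    intro h x hh
    refine hbar_eq _ _ (hbar x).1 ?_
    rw [mul_assoc]
    exact H.mul_mem hh (hbar x).2
  have hbarY : ∀ a b : G, b * a⁻¹ ∈ Y → bar b = bar a := by
    intro a b hab
    have h1 : bar ((b * a⁻¹) * a) = bar a := hbarH _ _ (hYH hab)
    rwa [inv_mul_cancel_right] at h1
  -- the projection `Y\G → Y\H`
  let ψ : G → Quotient (QuotientGroup.rightRel (Y.subgroupOf H)) :=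
    fun g => Quotient.mk'' ⟨g * (bar g)⁻¹, (hbar g).2⟩
  have hψwd : ∀ a b : G, @Setoid.r G (QuotientGroup.rightRel Y) a b → ψ a = ψ b := by
    intro a b hab
    rw [QuotientGroup.rightRel_apply] at hab
    have hb : bar b = bar a := hbarY a b hab
    apply Quotient.sound'
    rw [QuotientGroup.rightRel_apply, Subgroup.mem_subgroupOf]
    push_cast
    rw [hb]
    convert hab using 1
    group
  let π : Quotient (QuotientGroup.rightRel Y) → Quotient (QuotientGroup.rightRel (Y.subgroupOf H)) :=
    fun q => Quotient.liftOn' q ψ hψwd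
  have hβwd : ∀ a b : G, @Setoid.r G (QuotientGroup.rightRel Y) a b →
      (⟨bar a, (hbar a).1⟩ : {x // x ∈ T}) = ⟨bar b, (hbar b).1⟩ := by
    intro a b hab
    rw [QuotientGroup.rightRel_apply] at hab
    exact Subtype.ext (hbarY a b hab).symm
  let β : Quotient (QuotientGroup.rightRel Y) → {x // x ∈ T} :=
    fun q => Quotient.liftOn' q (fun g => ⟨bar g, (hbar g).1⟩) hβwd
  -- the equivalence  (Y\H) × T ≃ Y\G
  have hewd : ∀ (t : {x // x ∈ T}) (a b : ↥H), @Setoid.r ↥H (QuotientGroup.rightRel (Y.subgroupOf H)) a b →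
      (Quotient.mk'' ((a : G) * t) : Quotient (QuotientGroup.rightRel Y)) =
        Quotient.mk'' ((b : G) * t) := by
    intro t a b hab
    rw [QuotientGroup.rightRel_apply, Subgroup.mem_subgroupOf] at hab
    apply Quotient.sound'
    rw [QuotientGroup.rightRel_apply]
    convert hab using 1
    push_cast
    group
  let e : Quotient (QuotientGroup.rightRel (Y.subgroupOf H)) × {x // x ∈ T} ≃
      Quotient (QuotientGroup.rightRel Y) :=
    { toFun := fun pt => Quotient.liftOn' pt.1
        (fun h => Quotient.mk'' ((h : G) * pt.2)) (hewd pt.2)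
      invFun := fun q => (π q, β q)
      left_inv := by
        rintro ⟨p, t⟩
        induction p using Quotient.inductionOn' with
        | h h =>
          have hb : bar ((h : G) * t) = t := by
            refine hbar_eq _ _ t.2 ?_
            rw [mul_inv_cancel_right]
            exact h.2
          refine Prod.ext ?_ ?_
          · show ψ ((h : G) * t) = Quotient.mk'' h
            apply Quotient.sound'
            rw [QuotientGroup.rightRel_apply, Subgroup.mem_subgroupOf]
            push_cast
            rw [hb]
            convert Y.one_mem using 1
            group
          · exact Subtype.ext hb
      right_inv := by
        intro q
        induction q using Quotient.inductionOn' with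
        | h g =>
          show Quotient.mk'' ((g * (bar g)⁻¹) * bar g) = Quotient.mk'' g
          rw [inv_mul_cancel_right] }
  have hπe : ∀ p t, π (e (p, t)) = p := fun p t => congrArg Prod.fst (e.left_inv (p, t))
  -- summation over Y\G through the equivalence
  have hsum : ∀ F : Quotient (QuotientGroup.rightRel Y) → ℝ,
      ∑ q, F q = ∑ p, ∑ t : {x // x ∈ T}, F (e (p, t)) := by
    intro F
    rw [← Equiv.sum_comp e F, Fintype.sum_prod_type]
  -- the pulled-back function
  have h0 : ∑ q, f (π q) = 0 := by
    rw [hsum fun q => f (π q)]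
    simp only [hπe]
    rw [Finset.sum_comm]
    exact Finset.sum_eq_zero fun _ _ => hf
  have hvv : ∑ q, f (π q) * f (π q) = (T.card : ℝ) * ∑ p, f p * f p := by
    rw [hsum fun q => f (π q) * f (π q)]
    simp only [hπe]
    rw [Finset.sum_comm]
    simp [Finset.sum_const, Fintype.card_coe, nsmul_eq_mul, Finset.mul_sum]
  -- the key identification of the averaging operators
  have key : ∀ (h : ↥H) (t : {x // x ∈ T}) (i : Fin d),
      f (π (rmul Y (e (Quotient.mk'' h, t)) (s i))) =
      f (rmul (Y.subgroupOf H) (Quotient.mk'' h)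
          ⟨(t : G) * s i * (bar ((t : G) * s i))⁻¹, (hbar ((t : G) * s i)).2⟩) := by
    intro h t i
    congr 1
    show ψ (((h : G) * t) * s i) =
      Quotient.mk'' (h * ⟨(t : G) * s i * (bar ((t : G) * s i))⁻¹, (hbar _).2⟩)
    have hb : bar (((h : G) * t) * s i) = bar ((t : G) * s i) := by
      rw [mul_assoc]
      exact hbarH _ _ h.2
    apply Quotient.sound'
    rw [QuotientGroup.rightRel_apply, Subgroup.mem_subgroupOf]
    push_cast
    rw [hb]
    convert Y.one_mem using 1
    group
  have hM : ∑ q, ((d : ℝ)⁻¹ * ∑ i, f (π (rmul Y q (s i)))) * f (π q)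
      = ∑ p, ∑ t ∈ T, ((d : ℝ)⁻¹ * ∑ i, f (rmul (Y.subgroupOf H) p
          ⟨t * s i * (bar (t * s i))⁻¹, (hbar (t * s i)).2⟩)) * f p := by
    rw [hsum fun q => ((d : ℝ)⁻¹ * ∑ i, f (π (rmul Y q (s i)))) * f (π q)]
    refine Finset.sum_congr rfl fun p _ => ?_
    induction p using Quotient.inductionOn' with
    | h h =>
      rw [← Finset.sum_coe_sort T]
      refine Finset.sum_congr rfl fun t _ => ?_
      rw [hπe]
      congr 2
      exact Finset.sum_congr rfl fun i _ => key h t i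
  -- put things together
  have hgap' := hgap (fun q => f (π q)) h0
  beta_reduce at hgap'
  rw [hM, hvv] at hgap'
  -- pull the constants out of the sums
  have hA1 : ∑ p, ∑ t ∈ T, ((d : ℝ)⁻¹ * ∑ i, f (rmul (Y.subgroupOf H) p
          ⟨t * s i * (bar (t * s i))⁻¹, (hbar (t * s i)).2⟩)) * f p
      = (d : ℝ)⁻¹ * ∑ p, (∑ t ∈ T, ∑ i, f (rmul (Y.subgroupOf H) p
          ⟨t * s i * (bar (t * s i))⁻¹, (hbar (t * s i)).2⟩)) * f p := by
    rw [Finset.mul_sum]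
    refine Finset.sum_congr rfl fun p _ => ?_
    rw [← Finset.sum_mul, ← Finset.mul_sum, mul_assoc]
  have hA2 : ∑ q, (((T.card : ℝ) * (d : ℝ))⁻¹ *
          ∑ t ∈ T, ∑ i, f (rmul (Y.subgroupOf H) q
            ⟨t * s i * (bar (t * s i))⁻¹, (hbar (t * s i)).2⟩)) * f q
      = ((T.card : ℝ) * (d : ℝ))⁻¹ * ∑ p, (∑ t ∈ T, ∑ i, f (rmul (Y.subgroupOf H) p
          ⟨t * s i * (bar (t * s i))⁻¹, (hbar (t * s i)).2⟩)) * f p := by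
    rw [Finset.mul_sum]
    refine Finset.sum_congr rfl fun p _ => ?_
    rw [mul_assoc]
  rw [hA1] at hgap'
  rw [hA2]
  set A := ∑ p, (∑ t ∈ T, ∑ i, f (rmul (Y.subgroupOf H) p
      ⟨t * s i * (bar (t * s i))⁻¹, (hbar (t * s i)).2⟩)) * f p with hAdef
  have hTpos : 0 < (T.card : ℝ) := by
    have : T.Nonempty := ⟨bar 1, (hbar 1).1⟩
    exact_mod_cast Finset.card_pos.mpr this
  have hTne : (T.card : ℝ) ≠ 0 := ne_of_gt hTpos
  calc ((T.card : ℝ) * (d : ℝ))⁻¹ * A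
      = (T.card : ℝ)⁻¹ * ((d : ℝ)⁻¹ * A) := by rw [mul_inv]; ring
    _ ≤ (T.card : ℝ)⁻¹ * ((1 - ε) * ((T.card : ℝ) * ∑ p, f p * f p)) := by
        apply mul_le_mul_of_nonneg_left hgap'
        positivity
    _ = (1 - ε) * ∑ p, f p * f p := by
        field_simp
end

section
/- Let G be a finite group, Y ≤ H ≤ G subgroups, and S a symmetric multiset in G of size d ≥ 1 given by s₁,…,s_d. Let T ⊆ G be a right transversal of H in G and for x ∈ G let x̄ denote the unique element of T ∩ Hx. Let M_G be the averaging operator on functions on Y\G, (M_G f)(Yg) = (1/d)·∑_i f(Y g s_i), and let M_H be the averaging operator on functions on Y\H, (M_H f)(Yh) = (1/(|T|·d))·∑_{t∈T}∑_i f(Y h t s_i (t s_i)̄⁻¹). If a ≥ 0 is such that |⟨M_G v, v⟩| ≤ a·⟨v,v⟩ for every mean-zero v : Y\G → ℝ, then |⟨M_H f, f⟩| ≤ a·⟨f,f⟩ for every mean-zero f : Y\H → ℝ. (That is, λ(H,Y,S̄) ≤ λ(G,Y,S).) -/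
open Finset

section RS

variable {G : Type*} [Group G]

/-- Embedding `Y\H → Y\G`, `Yh ↦ Yht`, for a fixed `t : G`. -/
def embQ (H Y : Subgroup G) (t : G)
    (p : Quotient (QuotientGroup.rightRel (Y.subgroupOf H))) :
    Quotient (QuotientGroup.rightRel Y) :=
  Quotient.map' (fun h : H => (h : G) * t)
    (fun a b hab => by
      rw [QuotientGroup.rightRel_apply] at hab ⊢
      have h' : (b : G) * (a : G)⁻¹ ∈ Y := by
        simpa using Subgroup.mem_subgroupOf.mp hab
      have e : (b : G) * t * ((a : G) * t)⁻¹ = (b : G) * (a : G)⁻¹ := by group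
      rwa [e]) p

lemma bar_eq (H : Subgroup G) (T : Finset G) (bar : G → G)
    (hT : ∀ x : G, ∃! t, t ∈ T ∧ x * t⁻¹ ∈ H)
    (hbar : ∀ x : G, bar x ∈ T ∧ x * (bar x)⁻¹ ∈ H)
    {x y : G} (h : y * x⁻¹ ∈ H) : bar y = bar x := by
  obtain ⟨t, -, hu⟩ := hT y
  have h1 : bar y = t := hu _ ⟨(hbar y).1, (hbar y).2⟩
  have h2 : bar x = t := by
    refine hu _ ⟨(hbar x).1, ?_⟩
    have hm := H.mul_mem h (hbar x).2
    have e : y * x⁻¹ * (x * (bar x)⁻¹) = y * (bar x)⁻¹ := by group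
    rwa [e] at hm
  rw [h1, h2]

lemma bar_self (H : Subgroup G) (T : Finset G) (bar : G → G)
    (hT : ∀ x : G, ∃! t, t ∈ T ∧ x * t⁻¹ ∈ H)
    (hbar : ∀ x : G, bar x ∈ T ∧ x * (bar x)⁻¹ ∈ H)
    {t : G} (ht : t ∈ T) : bar t = t := by
  obtain ⟨u, -, hu⟩ := hT t
  have h1 : bar t = u := hu _ ⟨(hbar t).1, (hbar t).2⟩
  have h2 : t = u := hu _ ⟨ht, by simpa using H.one_mem⟩
  rw [h1, ← h2]

/-- Pullback of a function on `Y\H` to `Y\G`. -/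
def liftQ (H Y : Subgroup G) (hYH : Y ≤ H) (T : Finset G) (bar : G → G)
    (hT : ∀ x : G, ∃! t, t ∈ T ∧ x * t⁻¹ ∈ H)
    (hbar : ∀ x : G, bar x ∈ T ∧ x * (bar x)⁻¹ ∈ H)
    (f : Quotient (QuotientGroup.rightRel (Y.subgroupOf H)) → ℝ) :
    Quotient (QuotientGroup.rightRel Y) → ℝ := fun q =>
  Quotient.liftOn' q (fun g => f (Quotient.mk'' ⟨g * (bar g)⁻¹, (hbar g).2⟩))
    (fun x y hxy => by
      rw [QuotientGroup.rightRel_apply] at hxy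
      have hb : bar y = bar x := bar_eq H T bar hT hbar (hYH hxy)
      refine congrArg f (Quotient.sound' ?_)
      rw [QuotientGroup.rightRel_apply, Subgroup.mem_subgroupOf]
      show y * (bar y)⁻¹ * (x * (bar x)⁻¹)⁻¹ ∈ Y
      have e : y * (bar y)⁻¹ * (x * (bar x)⁻¹)⁻¹ = y * x⁻¹ := by rw [hb]; group
      rw [e]; exact hxy)

lemma liftQ_emb (H Y : Subgroup G) (hYH : Y ≤ H) (T : Finset G) (bar : G → G)
    (hT : ∀ x : G, ∃! t, t ∈ T ∧ x * t⁻¹ ∈ H)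
    (hbar : ∀ x : G, bar x ∈ T ∧ x * (bar x)⁻¹ ∈ H)
    (f : Quotient (QuotientGroup.rightRel (Y.subgroupOf H)) → ℝ)
    (p : Quotient (QuotientGroup.rightRel (Y.subgroupOf H))) {t : G} (ht : t ∈ T) :
    liftQ H Y hYH T bar hT hbar f (embQ H Y t p) = f p := by
  induction p using Quotient.inductionOn' with
  | h h =>
    show f (Quotient.mk'' ⟨(h : G) * t * (bar ((h : G) * t))⁻¹, _⟩) = f (Quotient.mk'' h)
    have hb : bar ((h : G) * t) = t := by
      have h1 : bar ((h : G) * t) = bar t :=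
        bar_eq H T bar hT hbar (by simpa using h.2)
      rw [h1, bar_self H T bar hT hbar ht]
    refine congrArg f (congrArg Quotient.mk'' (Subtype.ext ?_))
    show (h : G) * t * (bar ((h : G) * t))⁻¹ = (h : G)
    rw [hb]; group

lemma liftQ_emb_mul (H Y : Subgroup G) (hYH : Y ≤ H) (T : Finset G) (bar : G → G)
    (hT : ∀ x : G, ∃! t, t ∈ T ∧ x * t⁻¹ ∈ H)
    (hbar : ∀ x : G, bar x ∈ T ∧ x * (bar x)⁻¹ ∈ H)
    (f : Quotient (QuotientGroup.rightRel (Y.subgroupOf H)) → ℝ)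
    (p : Quotient (QuotientGroup.rightRel (Y.subgroupOf H))) (t x : G) :
    liftQ H Y hYH T bar hT hbar f (rmul Y (embQ H Y t p) x) =
      f (rmul (Y.subgroupOf H) p ⟨t * x * (bar (t * x))⁻¹, (hbar (t * x)).2⟩) := by
  induction p using Quotient.inductionOn' with
  | h h =>
    show f (Quotient.mk'' ⟨(h : G) * t * x * (bar ((h : G) * t * x))⁻¹, _⟩) =
      f (Quotient.mk'' (h * ⟨t * x * (bar (t * x))⁻¹, (hbar (t * x)).2⟩))
    have hb : bar ((h : G) * t * x) = bar (t * x) := by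
      refine bar_eq H T bar hT hbar ?_
      have e : (h : G) * t * x * (t * x)⁻¹ = (h : G) := by group
      rw [e]; exact h.2
    refine congrArg f (congrArg Quotient.mk'' (Subtype.ext ?_))
    show (h : G) * t * x * (bar ((h : G) * t * x))⁻¹ =
      (h : G) * (t * x * (bar (t * x))⁻¹)
    rw [hb]; group

/-- The bijection `Y\H × T ≃ Y\G`. -/
noncomputable def EQ (H Y : Subgroup G) (hYH : Y ≤ H) (T : Finset G) (bar : G → G)
    (hT : ∀ x : G, ∃! t, t ∈ T ∧ x * t⁻¹ ∈ H)
    (hbar : ∀ x : G, bar x ∈ T ∧ x * (bar x)⁻¹ ∈ H) :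
    Quotient (QuotientGroup.rightRel (Y.subgroupOf H)) × {t // t ∈ T} ≃
      Quotient (QuotientGroup.rightRel Y) where
  toFun x := embQ H Y x.2.1 x.1
  invFun q := Quotient.liftOn' q
    (fun g => (Quotient.mk'' ⟨g * (bar g)⁻¹, (hbar g).2⟩, ⟨bar g, (hbar g).1⟩))
    (fun x y hxy => by
      rw [QuotientGroup.rightRel_apply] at hxy
      have hb : bar y = bar x := bar_eq H T bar hT hbar (hYH hxy)
      refine Prod.ext ?_ (Subtype.ext hb.symm)
      refine Quotient.sound' ?_
      rw [QuotientGroup.rightRel_apply, Subgroup.mem_subgroupOf]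
      show y * (bar y)⁻¹ * (x * (bar x)⁻¹)⁻¹ ∈ Y
      have e : y * (bar y)⁻¹ * (x * (bar x)⁻¹)⁻¹ = y * x⁻¹ := by rw [hb]; group
      rw [e]; exact hxy)
  left_inv := by
    rintro ⟨p, t, ht⟩
    induction p using Quotient.inductionOn' with
    | h h =>
      have hb : bar ((h : G) * t) = t := by
        have h1 : bar ((h : G) * t) = bar t :=
          bar_eq H T bar hT hbar (by simpa using h.2)
        rw [h1, bar_self H T bar hT hbar ht]
      refine Prod.ext ?_ (Subtype.ext hb)
      show Quotient.mk'' ⟨(h : G) * t * (bar ((h : G) * t))⁻¹, _⟩ = Quotient.mk'' h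
      refine congrArg Quotient.mk'' (Subtype.ext ?_)
      show (h : G) * t * (bar ((h : G) * t))⁻¹ = (h : G)
      rw [hb]; group
  right_inv := by
    intro q
    induction q using Quotient.inductionOn' with
    | h g =>
      show Quotient.mk'' (g * (bar g)⁻¹ * bar g) = Quotient.mk'' g
      rw [inv_mul_cancel_right]

lemma sum_fiber [Fintype G] (H Y : Subgroup G) (hYH : Y ≤ H) (T : Finset G) (bar : G → G)
    (hT : ∀ x : G, ∃! t, t ∈ T ∧ x * t⁻¹ ∈ H)
    (hbar : ∀ x : G, bar x ∈ T ∧ x * (bar x)⁻¹ ∈ H)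
    (F : Quotient (QuotientGroup.rightRel Y) → ℝ) :
    ∑ q, F q = ∑ p, ∑ t ∈ T, F (embQ H Y t p) := by
  rw [← Equiv.sum_comp (EQ H Y hYH T bar hT hbar) F, Fintype.sum_prod_type]
  exact Finset.sum_congr rfl fun p _ => Finset.sum_coe_sort T fun t => F (embQ H Y t p)

end RS

/-- Monotonicity of `λ` under the Reidemeister–Schreier rewriting:
if every mean-zero function `v` on `Y\G` satisfies `|⟨M_G v, v⟩| ≤ a⟨v,v⟩`, then every
mean-zero function `f` on `Y\H` satisfies `|⟨M_H f, f⟩| ≤ a⟨f,f⟩`, where `M_G` is the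
averaging operator of the multiset `S = (s₁, …, s_d)` on `Y\G` and `M_H` is the averaging
operator on `Y\H` of the Reidemeister–Schreier multiset
`S̄ = { t·sᵢ·(t·sᵢ)̄⁻¹ : t ∈ T, 1 ≤ i ≤ d }` attached to a right transversal `T` of `H`.
That is, `λ(H,Y,S̄) ≤ λ(G,Y,S)`. -/
theorem lambda_reidemeister_schreier
    {G : Type*} [Group G] [Fintype G] (H Y : Subgroup G) (hYH : Y ≤ H)
    (d : ℕ) (hd : 1 ≤ d) (s : Fin d → G)
    (σ : Fin d → Fin d) (hσ : ∀ i, σ (σ i) = i) (hsσ : ∀ i, s (σ i) = (s i)⁻¹)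
    (T : Finset G) (bar : G → G)
    (hT : ∀ x : G, ∃! t, t ∈ T ∧ x * t⁻¹ ∈ H)
    (hbar : ∀ x : G, bar x ∈ T ∧ x * (bar x)⁻¹ ∈ H)
    (a : ℝ) (ha : 0 ≤ a)
    (hlam : ∀ v : Quotient (QuotientGroup.rightRel Y) → ℝ, (∑ q, v q) = 0 →
      |∑ q, ((d : ℝ)⁻¹ * ∑ i, v (rmul Y q (s i))) * v q| ≤ a * ∑ q, v q * v q) :
    ∀ f : Quotient (QuotientGroup.rightRel (Y.subgroupOf H)) → ℝ, (∑ q, f q) = 0 →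
      |∑ q, (((T.card : ℝ) * (d : ℝ))⁻¹ *
          ∑ t ∈ T, ∑ i, f (rmul (Y.subgroupOf H) q
            ⟨t * s i * (bar (t * s i))⁻¹, (hbar (t * s i)).2⟩)) * f q| ≤
        a * ∑ q, f q * f q := by
  intro f hf0
  set v := liftQ H Y hYH T bar hT hbar f with hv
  have hc0 : (0 : ℝ) < (T.card : ℝ) := by
    obtain ⟨t, ⟨ht, -⟩, -⟩ := hT 1
    exact_mod_cast Finset.card_pos.mpr ⟨t, ht⟩
  set c : ℝ := (T.card : ℝ) with hc
  have hve : ∀ p {t : G}, t ∈ T → v (embQ H Y t p) = f p :=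
    fun p t ht => liftQ_emb H Y hYH T bar hT hbar f p ht
  have hvem : ∀ p (t x : G), v (rmul Y (embQ H Y t p) x) =
      f (rmul (Y.subgroupOf H) p ⟨t * x * (bar (t * x))⁻¹, (hbar (t * x)).2⟩) :=
    fun p t x => liftQ_emb_mul H Y hYH T bar hT hbar f p t x
  -- v is mean-zero
  have hv0 : ∑ q, v q = 0 := by
    rw [sum_fiber H Y hYH T bar hT hbar]
    calc ∑ p, ∑ t ∈ T, v (embQ H Y t p) = ∑ p, ∑ _t ∈ T, f p :=
          Finset.sum_congr rfl fun p _ => Finset.sum_congr rfl fun t ht =>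
            hve p ht
      _ = c * ∑ p, f p := by simp [Finset.mul_sum, mul_comm, hc]
      _ = 0 := by rw [hf0, mul_zero]
  have hvv : ∑ q, v q * v q = c * ∑ p, f p * f p := by
    rw [sum_fiber H Y hYH T bar hT hbar]
    calc ∑ p, ∑ t ∈ T, v (embQ H Y t p) * v (embQ H Y t p)
        = ∑ p, ∑ _t ∈ T, f p * f p :=
          Finset.sum_congr rfl fun p _ => Finset.sum_congr rfl fun t ht => by
            rw [hve p ht]
      _ = c * ∑ p, f p * f p := by simp [Finset.mul_sum, mul_comm, hc]
  -- the main sum transfer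
  set W : Quotient (QuotientGroup.rightRel (Y.subgroupOf H)) → ℝ :=
    fun p => ∑ t ∈ T, ∑ i, f (rmul (Y.subgroupOf H) p
      ⟨t * s i * (bar (t * s i))⁻¹, (hbar (t * s i)).2⟩) with hW
  have hmain : ∑ q, ((d : ℝ)⁻¹ * ∑ i, v (rmul Y q (s i))) * v q
      = ∑ p, ((d : ℝ)⁻¹ * W p) * f p := by
    rw [sum_fiber H Y hYH T bar hT hbar]
    refine Finset.sum_congr rfl fun p _ => ?_
    calc ∑ t ∈ T, ((d : ℝ)⁻¹ * ∑ i, v (rmul Y (embQ H Y t p) (s i))) * v (embQ H Y t p)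
        = ∑ t ∈ T, ((d : ℝ)⁻¹ * ∑ i, f (rmul (Y.subgroupOf H) p
            ⟨t * s i * (bar (t * s i))⁻¹, (hbar (t * s i)).2⟩)) * f p := by
          refine Finset.sum_congr rfl fun t ht => ?_
          rw [hve p ht]
          congr 2
          exact Finset.sum_congr rfl fun i _ => hvem p t (s i)
      _ = ((d : ℝ)⁻¹ * W p) * f p := by
          rw [hW]
          simp only [Finset.mul_sum, Finset.sum_mul]
  have hkey := hlam v hv0
  rw [hmain, hvv] at hkey
  have hsc : ∑ p, ((c * (d : ℝ))⁻¹ * W p) * f p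
      = c⁻¹ * ∑ p, ((d : ℝ)⁻¹ * W p) * f p := by
    rw [Finset.mul_sum]
    refine Finset.sum_congr rfl fun p _ => ?_
    rw [mul_inv]
    ring
  rw [hsc, abs_mul, abs_inv, abs_of_pos hc0]
  calc c⁻¹ * |∑ p, ((d : ℝ)⁻¹ * W p) * f p| ≤ c⁻¹ * (a * (c * ∑ p, f p * f p)) :=
        mul_le_mul_of_nonneg_left hkey (by positivity)
    _ = a * ∑ p, f p * f p := by field_simp
end
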